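/- arXiv:2102.10379 — 4 statements merged into one kernel-verified Lean document; each statement's English description precedes it below -/
import Mathlib

section
/- For every β > 0 and every u ∈ H^{1/2}(ℝ), the integral ∫_ℝ (e^{β u(x)²} − 1) dx is finite. -/
open MeasureTheory Real Filter

noncomputable section

/-- Squared Gagliardo seminorm `[u]²` for `s = 1/2`, `p = 2`, `N = 1`. -/
def gagliardoSq (u : ℝ → ℝ) : ℝ :=
  ∫ p : ℝ × ℝ, (u p.1 - u p.2) ^ 2 / |p.1 - p.2| ^ 2

/-- Membership in `H^{1/2}(ℝ)`. -/
def memH12 (u : ℝ → ℝ) : Prop :=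
  Integrable (fun x : ℝ => (u x) ^ 2) ∧
  Integrable (fun p : ℝ × ℝ => (u p.1 - u p.2) ^ 2 / |p.1 - p.2| ^ 2)

/-- Squared norm `‖u‖² = ‖u‖_{L²}² + [u]²` on `H^{1/2}(ℝ)`. -/
def sobNormSq (u : ℝ → ℝ) : ℝ :=
  (∫ x : ℝ, (u x) ^ 2) + gagliardoSq u

/-- Squared weighted norm `‖u‖_*² = ∫ ln(1+|x|) u(x)² dx`. -/
def starNormSq (u : ℝ → ℝ) : ℝ :=
  ∫ x : ℝ, Real.log (1 + |x|) * (u x) ^ 2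

/-- Membership in the space `X`. -/
def memX (u : ℝ → ℝ) : Prop :=
  memH12 u ∧ Integrable (fun x : ℝ => Real.log (1 + |x|) * (u x) ^ 2)

/-- Squared norm `‖u‖_X² = ‖u‖² + ‖u‖_*²` on `X`. -/
def XnormSq (u : ℝ → ℝ) : ℝ :=
  sobNormSq u + starNormSq u

/-- The logarithmic Choquard functional `W(u) = ∬ ln|x-y| u(x)² u(y)² dx dy`. -/
def Wfun (u : ℝ → ℝ) : ℝ :=
  ∫ p : ℝ × ℝ, Real.log |p.1 - p.2| * (u p.1) ^ 2 * (u p.2) ^ 2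

/-- Primitive `F(t) = ∫₀ᵗ f(s) ds`. -/
def Fprim (f : ℝ → ℝ) (t : ℝ) : ℝ :=
  ∫ s in (0 : ℝ)..t, f s

/-- The energy functional
`E(u) = ½‖u‖² + ¼W(u) − ∫ F(u) − (μ/(1−γ)) ∫ |u|^{1−γ}`. -/
def energy (f : ℝ → ℝ) (μ γ : ℝ) (u : ℝ → ℝ) : ℝ :=
  (1 / 2) * sobNormSq u + (1 / 4) * Wfun u - (∫ x : ℝ, Fprim f (u x))
    - (μ / (1 - γ)) * ∫ x : ℝ, |u x| ^ (1 - γ)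

/-- Bilinear Gagliardo form, the weak form of `(−Δ)^{1/2}`. -/
def bilinGagliardo (u φ : ℝ → ℝ) : ℝ :=
  ∫ p : ℝ × ℝ, (u p.1 - u p.2) * (φ p.1 - φ p.2) / |p.1 - p.2| ^ 2

/-- Weak solution of `(−Δ)^{1/2}u + u + (ln|·|*u²)u = f(u) + μ|u|^{−γ−1}u` in `ℝ`. -/
def isWeakSolution (f : ℝ → ℝ) (μ γ : ℝ) (u : ℝ → ℝ) : Prop :=
  memX u ∧ ∀ φ : ℝ → ℝ, memX φ →
    bilinGagliardo u φ + (∫ x : ℝ, u x * φ x)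
      + (∫ p : ℝ × ℝ, Real.log |p.1 - p.2| * (u p.2) ^ 2 * u p.1 * φ p.1)
    = (∫ x : ℝ, f (u x) * φ x) + μ * ∫ x : ℝ, |u x| ^ (-γ - 1) * u x * φ x

/-- Hypothesis (A1): `f` continuous, `f(0)=0`, `F ≥ 0`, critical exponential growth
with exponent `θ ∈ (0, π]`. -/
def A1hyp (f : ℝ → ℝ) (θ : ℝ) : Prop :=
  Continuous f ∧ f 0 = 0 ∧ (∀ t : ℝ, 0 ≤ Fprim f t) ∧ 0 < θ ∧ θ ≤ Real.pi ∧
  (∀ β : ℝ, θ < β →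
    Tendsto (fun t : ℝ => f t / (Real.exp (β * t ^ 2) - 1))
      (Filter.comap (fun t : ℝ => |t|) Filter.atTop) (nhds 0)) ∧
  (∀ β : ℝ, 0 < β → β < θ →
    Tendsto (fun t : ℝ => f t / (Real.exp (β * t ^ 2) - 1))
      (Filter.comap (fun t : ℝ => |t|) Filter.atTop) Filter.atTop)

/-- Hypothesis (A2): `lim_{t→0} f(t)/|t| = 0`. -/
def A2hyp (f : ℝ → ℝ) : Prop :=
  Tendsto (fun t : ℝ => f t / |t|) (nhdsWithin 0 {(0 : ℝ)}ᶜ) (nhds 0)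

/-- Hypothesis (A3): there is `L > 4` with `t f(t) ≥ L F(t) > 0` for `t ≠ 0`. -/
def A3hyp (f : ℝ → ℝ) : Prop :=
  ∃ L : ℝ, 4 < L ∧ ∀ t : ℝ, t ≠ 0 → 0 < L * Fprim f t ∧ L * Fprim f t ≤ t * f t

/-- Hypothesis (A4) with given `q`, `C_q`: `F(t) ≥ C_q |t|^q`. -/
def A4hyp (f : ℝ → ℝ) (q Cq : ℝ) : Prop :=
  ∀ t : ℝ, Cq * |t| ^ q ≤ Fprim f t

/-- The class `Γ` of paths in `X` (continuous for the `X`-norm) joining `0` to a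
point of negative energy. -/
def pathSet (f : ℝ → ℝ) (μ γ : ℝ) : Set (ℝ → ℝ → ℝ) :=
  {g | (∀ t ∈ Set.Icc (0 : ℝ) 1, memX (g t)) ∧
    (g 0 = fun _ => 0) ∧ energy f μ γ (g 1) < 0 ∧
    ∀ t ∈ Set.Icc (0 : ℝ) 1, ∀ ε : ℝ, 0 < ε → ∃ δ : ℝ, 0 < δ ∧
      ∀ s ∈ Set.Icc (0 : ℝ) 1, |s - t| < δ →
        XnormSq (fun x => g s x - g t x) < ε ^ 2}

/-- The mountain pass level `d = inf_{γ̂∈Γ} max_{t∈[0,1]} E(γ̂(t))`. -/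
def mpLevel (f : ℝ → ℝ) (μ γ : ℝ) : ℝ :=
  sInf {m : ℝ | ∃ g ∈ pathSet f μ γ,
    m = sSup ((fun t => energy f μ γ (g t)) '' Set.Icc (0 : ℝ) 1)}

/-- Weak solution of the auxiliary singular problem
`(−Δ)^{1/2}w + w + (ln|·|*w²)w = μ w^{−γ}`, `w > 0`, in `ℝ`. -/
def isAuxSolution (μ γ : ℝ) (w : ℝ → ℝ) : Prop :=
  memX w ∧ (∀ᵐ x : ℝ, 0 < w x) ∧ ∀ φ : ℝ → ℝ, memX φ →
    bilinGagliardo w φ + (∫ x : ℝ, w x * φ x)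
      + (∫ p : ℝ × ℝ, Real.log |p.1 - p.2| * (w p.2) ^ 2 * w p.1 * φ p.1)
    = μ * ∫ x : ℝ, (w x) ^ (-γ) * φ x


open scoped ENNReal NNReal

namespace ExpAux

/-- distribution function of `v` -/
def lm (v : ℝ → ℝ) (t : ℝ) : ℝ≥0∞ := volume {x : ℝ | t < v x}

/-- the truncated kernel -/
def kern (s : ℝ) (p : ℝ × ℝ) : ℝ≥0∞ := ENNReal.ofReal (s ^ 2 / |p.1 - p.2| ^ 2)

/-- the `k`-th seminorm piece -/
def Pk (v : ℝ → ℝ) (s : ℝ) (k : ℕ) : ℝ≥0∞ :=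
  ∫⁻ p : ℝ × ℝ, Set.indicator
    ({x : ℝ | ((k : ℝ) + 1) * s < v x} ×ˢ {y : ℝ | v y ≤ ((k : ℝ) - 1) * s}) (kern s) p

/-- the full Gagliardo lintegral -/
def eps (v : ℝ → ℝ) : ℝ≥0∞ :=
  ∫⁻ p : ℝ × ℝ, ENNReal.ofReal ((v p.1 - v p.2) ^ 2 / |p.1 - p.2| ^ 2)

lemma measurable_kern (s : ℝ) : Measurable (kern s) := by
  apply Measurable.ennreal_ofReal
  exact measurable_const.div (((measurable_fst.sub measurable_snd).abs).pow measurable_const)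

lemma count_le {v : ℝ → ℝ} (hv : Measurable v) {s : ℝ} (hs : 0 < s) (N : ℕ) (p : ℝ × ℝ) :
    ∑ k ∈ Finset.Icc 1 N, Set.indicator
      ({x : ℝ | ((k : ℝ) + 1) * s < v x} ×ˢ {y : ℝ | v y ≤ ((k : ℝ) - 1) * s}) (kern s) p
    ≤ ENNReal.ofReal ((v p.1 - v p.2) ^ 2 / |p.1 - p.2| ^ 2) := by
  classical
  set a := v p.1 with ha
  set b := v p.2 with hb
  set d := |p.1 - p.2| ^ 2 with hd
  have hd0 : 0 ≤ d := sq_nonneg _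
  have hsum : ∑ k ∈ Finset.Icc 1 N, Set.indicator
      ({x : ℝ | ((k : ℝ) + 1) * s < v x} ×ˢ {y : ℝ | v y ≤ ((k : ℝ) - 1) * s}) (kern s) p
      = ∑ k ∈ (Finset.Icc 1 N).filter
          (fun k : ℕ => ((k : ℝ) + 1) * s < a ∧ b ≤ ((k : ℝ) - 1) * s),
          ENNReal.ofReal (s ^ 2 / d) := by
    rw [Finset.sum_filter]
    refine Finset.sum_congr rfl fun k _ => ?_
    by_cases h : ((k : ℝ) + 1) * s < a ∧ b ≤ ((k : ℝ) - 1) * s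
    · rw [if_pos h, Set.indicator_of_mem]
      · rfl
      · exact Set.mk_mem_prod h.1 h.2
    · rw [if_neg h, Set.indicator_of_notMem]
      intro hmem
      exact h ⟨hmem.1, hmem.2⟩
  rw [hsum, Finset.sum_const, nsmul_eq_mul]
  set T := (Finset.Icc 1 N).filter
    (fun k : ℕ => ((k : ℝ) + 1) * s < a ∧ b ≤ ((k : ℝ) - 1) * s) with hT
  rcases T.eq_empty_or_nonempty with hTe | ⟨k₀, hk₀⟩
  · simp [hTe]
  · have hmem : ∀ k ∈ T, ((k : ℝ) + 1) * s < a ∧ b ≤ ((k : ℝ) - 1) * s ∧ 1 ≤ k := by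
      intro k hk
      rw [hT, Finset.mem_filter, Finset.mem_Icc] at hk
      exact ⟨hk.2.1, hk.2.2, hk.1.1⟩
    obtain ⟨h1, h2, h3⟩ := hmem k₀ hk₀
    have h3' : (1 : ℝ) ≤ (k₀ : ℝ) := by exact_mod_cast h3
    -- basic facts
    have hab : s ≤ a - b := by nlinarith
    have ha0 : 0 < a := by nlinarith
    -- card bound
    have hcard : (T.card : ℝ) ≤ (a - b) / s := by
      have hsub : T ⊆ Finset.Icc (⌈b / s⌉₊ + 1) ⌊a / s⌋₊ := by
        intro k hk
        obtain ⟨hk1, hk2, hk3⟩ := hmem k hk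
        rw [Finset.mem_Icc]
        constructor
        · have hbs : b / s ≤ ((k - 1 : ℕ) : ℝ) := by
            rw [Nat.cast_sub hk3, Nat.cast_one, div_le_iff₀ hs]
            linarith
          have := Nat.ceil_le.mpr hbs
          omega
        · apply Nat.le_floor
          rw [le_div_iff₀ hs]; nlinarith
      have hcard2 : T.card ≤ ⌊a / s⌋₊ + 1 - (⌈b / s⌉₊ + 1) := by
        calc T.card ≤ (Finset.Icc (⌈b / s⌉₊ + 1) ⌊a / s⌋₊).card := Finset.card_le_card hsub
        _ = ⌊a / s⌋₊ + 1 - (⌈b / s⌉₊ + 1) := Nat.card_Icc _ _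
      have hle : ⌈b / s⌉₊ + 1 ≤ ⌊a / s⌋₊ := by
        have := hsub hk₀
        rw [Finset.mem_Icc] at this
        exact le_trans this.1 this.2
      have hcast : ((⌊a / s⌋₊ + 1 - (⌈b / s⌉₊ + 1) : ℕ) : ℝ)
          = (⌊a / s⌋₊ : ℝ) - (⌈b / s⌉₊ : ℝ) := by
        rw [Nat.cast_sub (by omega)]
        push_cast; ring
      have hfl : (⌊a / s⌋₊ : ℝ) ≤ a / s := Nat.floor_le (by positivity)
      have hce : b / s ≤ (⌈b / s⌉₊ : ℝ) := Nat.le_ceil _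
      calc (T.card : ℝ) ≤ ((⌊a / s⌋₊ + 1 - (⌈b / s⌉₊ + 1) : ℕ) : ℝ) := by exact_mod_cast hcard2
        _ = (⌊a / s⌋₊ : ℝ) - (⌈b / s⌉₊ : ℝ) := hcast
        _ ≤ a / s - b / s := by linarith
        _ ≤ (a - b) / s := by rw [sub_div]
    -- conclude
    have key : (T.card : ℝ) * (s ^ 2 / d) ≤ (a - b) ^ 2 / d := by
      rcases eq_or_lt_of_le hd0 with h | h
      · rw [← h, div_zero, div_zero, mul_zero]
      · have h5 : (T.card : ℝ) * s ^ 2 ≤ (a - b) ^ 2 := by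
          have hstep : (T.card : ℝ) * s ^ 2 ≤ ((a - b) / s) * s ^ 2 := by nlinarith
          have hstep2 : ((a - b) / s) * s ^ 2 = (a - b) * s := by field_simp
          nlinarith
        calc (T.card : ℝ) * (s ^ 2 / d) = (T.card : ℝ) * s ^ 2 / d := by ring
        _ ≤ (a - b) ^ 2 / d := by gcongr
    calc (T.card : ℝ≥0∞) * ENNReal.ofReal (s ^ 2 / d)
        = ENNReal.ofReal ((T.card : ℝ) * (s ^ 2 / d)) := by
          rw [ENNReal.ofReal_mul (by positivity)]
          congr 1
          simp [ENNReal.ofReal_natCast]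
      _ ≤ ENNReal.ofReal ((a - b) ^ 2 / d) := ENNReal.ofReal_le_ofReal key


lemma measA {v : ℝ → ℝ} (hv : Measurable v) (c : ℝ) : MeasurableSet {x : ℝ | c < v x} :=
  measurableSet_lt measurable_const hv

lemma measB {v : ℝ → ℝ} (hv : Measurable v) (c : ℝ) : MeasurableSet {x : ℝ | v x ≤ c} :=
  measurableSet_le hv measurable_const

lemma sum_Pk_le {v : ℝ → ℝ} (hv : Measurable v) {s : ℝ} (hs : 0 < s) (N : ℕ) :
    ∑ k ∈ Finset.Icc 1 N, Pk v s k ≤ eps v := by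
  have hmeas : ∀ k : ℕ, Measurable (Set.indicator
      ({x : ℝ | ((k : ℝ) + 1) * s < v x} ×ˢ {y : ℝ | v y ≤ ((k : ℝ) - 1) * s}) (kern s)) :=
    fun k => (measurable_kern s).indicator
      (((measA hv _).prod (measB hv _)))
  calc ∑ k ∈ Finset.Icc 1 N, Pk v s k
      = ∫⁻ p : ℝ × ℝ, ∑ k ∈ Finset.Icc 1 N, Set.indicator
          ({x : ℝ | ((k : ℝ) + 1) * s < v x} ×ˢ {y : ℝ | v y ≤ ((k : ℝ) - 1) * s})
          (kern s) p := (lintegral_finset_sum _ (fun k _ => hmeas k)).symm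
    _ ≤ eps v := lintegral_mono (count_le hv hs N)

lemma Pk_le_eps {v : ℝ → ℝ} (hv : Measurable v) {s : ℝ} (hs : 0 < s) {k : ℕ} (hk : 1 ≤ k) :
    Pk v s k ≤ eps v := by
  refine le_trans ?_ (sum_Pk_le hv hs k)
  exact Finset.single_le_sum (fun i _ => zero_le) (Finset.mem_Icc.mpr ⟨hk, le_rfl⟩)

lemma step {v : ℝ → ℝ} (hv : Measurable v) {s : ℝ} (hs : 0 < s) (k : ℕ)
    (hma : lm v (((k : ℝ) - 1) * s) ≠ ⊤) :
    lm v (((k : ℝ) + 1) * s) * ENNReal.ofReal (s ^ 2)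
      ≤ 9 * lm v (((k : ℝ) - 1) * s) * Pk v s k := by
  set a := ((k : ℝ) - 1) * s with haa
  set A := {x : ℝ | ((k : ℝ) + 1) * s < v x} with hA
  set B := {y : ℝ | v y ≤ a} with hB
  have hsub : A ⊆ {x : ℝ | a < v x} := by
    intro x hx
    simp only [hA, Set.mem_setOf_eq] at hx ⊢
    nlinarith
  rcases eq_or_ne (lm v a) 0 with hz | hz
  · have : lm v (((k : ℝ) + 1) * s) = 0 :=
      le_antisymm (le_trans (measure_mono hsub) (le_of_eq hz)) zero_le
    rw [this, zero_mul]
    exact zero_le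
  · set b := (lm v a).toReal with hbb
    have hb : 0 < b := ENNReal.toReal_pos hz hma
    have hmb : lm v a = ENNReal.ofReal b := (ENNReal.ofReal_toReal hma).symm
    -- inner annulus bound
    have inner : ∀ x : ℝ, ENNReal.ofReal (s ^ 2 / (9 * b))
        ≤ ∫⁻ y in B, kern s (x, y) := by
      intro x
      set R := Set.Icc (x + b) (x + 3 * b) with hR
      have hvolR : volume R = ENNReal.ofReal (2 * b) := by
        rw [hR, Real.volume_Icc]
        congr 1
        ring
      have hBR : ENNReal.ofReal b ≤ volume (B ∩ R) := by
        have h1 : volume R ≤ volume (B ∩ R) + volume (R \ B) := by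
          refine le_trans (measure_mono ?_) (measure_union_le _ _)
          intro y hy
          by_cases hyB : y ∈ B
          · exact Or.inl ⟨hyB, hy⟩
          · exact Or.inr ⟨hy, hyB⟩
        have h2 : volume (R \ B) ≤ ENNReal.ofReal b := by
          rw [← hmb]
          refine measure_mono ?_
          intro y hy
          have : ¬ v y ≤ a := hy.2
          exact lt_of_not_ge this
        have h3 : ENNReal.ofReal b + ENNReal.ofReal b ≤ volume (B ∩ R) + ENNReal.ofReal b := by
          calc ENNReal.ofReal b + ENNReal.ofReal b
              = ENNReal.ofReal (2 * b) := by
                rw [← ENNReal.ofReal_add hb.le hb.le]; congr 1; ring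
            _ = volume R := hvolR.symm
            _ ≤ volume (B ∩ R) + volume (R \ B) := h1
            _ ≤ volume (B ∩ R) + ENNReal.ofReal b := add_le_add_right h2 _
        exact (ENNReal.add_le_add_iff_right ENNReal.ofReal_ne_top).mp h3
      have hkern : ∀ y ∈ B ∩ R, ENNReal.ofReal (s ^ 2 / (9 * b ^ 2)) ≤ kern s (x, y) := by
        intro y hy
        have hy1 : x + b ≤ y := hy.2.1
        have hy2 : y ≤ x + 3 * b := hy.2.2
        have habs : |(x, y).1 - (x, y).2| ^ 2 ≤ 9 * b ^ 2 := by
          have : |x - y| = y - x := by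
            rw [abs_sub_comm, abs_of_nonneg]; linarith
          simp only []
          rw [this]
          nlinarith
        have hpos : 0 < |(x, y).1 - (x, y).2| ^ 2 := by
          have : x ≠ y := by intro h; rw [h] at hy1; linarith
          have : x - y ≠ 0 := sub_ne_zero.mpr this
          positivity
        unfold kern
        apply ENNReal.ofReal_le_ofReal
        gcongr
      calc ENNReal.ofReal (s ^ 2 / (9 * b))
          = ENNReal.ofReal (s ^ 2 / (9 * b ^ 2)) * ENNReal.ofReal b := by
            rw [← ENNReal.ofReal_mul (by positivity)]
            congr 1
            field_simp
        _ ≤ ENNReal.ofReal (s ^ 2 / (9 * b ^ 2)) * volume (B ∩ R) :=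
            mul_le_mul_right hBR _
        _ = ∫⁻ y in B ∩ R, ENNReal.ofReal (s ^ 2 / (9 * b ^ 2)) := by
            rw [setLIntegral_const]
        _ ≤ ∫⁻ y in B ∩ R, kern s (x, y) := setLIntegral_mono
            ((measurable_kern s).comp (measurable_const.prodMk measurable_id)) hkern
        _ ≤ ∫⁻ y in B, kern s (x, y) := lintegral_mono_set Set.inter_subset_left
    -- Tonelli
    have hPk : Pk v s k = ∫⁻ x in A, ∫⁻ y in B, kern s (x, y) := by
      unfold Pk
      rw [lintegral_indicator ((measA hv _).prod (measB hv _))]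
      rw [Measure.volume_eq_prod, ← Measure.prod_restrict]
      exact lintegral_prod _ (measurable_kern s).aemeasurable
    have hPk_ge : ENNReal.ofReal (s ^ 2 / (9 * b)) * lm v (((k : ℝ) + 1) * s) ≤ Pk v s k := by
      rw [hPk]
      calc ENNReal.ofReal (s ^ 2 / (9 * b)) * lm v (((k : ℝ) + 1) * s)
          = ∫⁻ _ in A, ENNReal.ofReal (s ^ 2 / (9 * b)) := by
            rw [setLIntegral_const]; rfl
        _ ≤ ∫⁻ x in A, ∫⁻ y in B, kern s (x, y) :=
            setLIntegral_mono (Measurable.lintegral_prod_right' (measurable_kern s))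
              (fun x _ => inner x)
    -- conclude
    calc lm v (((k : ℝ) + 1) * s) * ENNReal.ofReal (s ^ 2)
        = ENNReal.ofReal (s ^ 2 / (9 * b)) * lm v (((k : ℝ) + 1) * s)
            * ENNReal.ofReal (9 * b) := by
          rw [mul_comm (ENNReal.ofReal (s ^ 2 / (9 * b))), mul_assoc,
            ← ENNReal.ofReal_mul (by positivity)]
          congr 2
          field_simp
      _ ≤ Pk v s k * ENNReal.ofReal (9 * b) := mul_le_mul_left hPk_ge _
      _ = 9 * lm v a * Pk v s k := by
          rw [ENNReal.ofReal_mul (by norm_num), hmb]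
          norm_num
          ring


lemma chain {v : ℝ → ℝ} (hv : Measurable v) {s : ℝ} (hs : 0 < s) (hm0 : lm v 0 ≠ ⊤)
    (n : ℕ) :
    lm v (2 * (n : ℝ) * s) * (ENNReal.ofReal (s ^ 2)) ^ n
      ≤ 9 ^ n * lm v 0 * ∏ j ∈ Finset.range n, Pk v s (2 * j + 1) := by
  induction n with
  | zero => simp
  | succ n ih =>
    have hmono : lm v (2 * (n : ℝ) * s) ≤ lm v 0 := by
      apply measure_mono
      intro x hx
      simp only [Set.mem_setOf_eq] at hx ⊢
      nlinarith [Nat.cast_nonneg (α := ℝ) n]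
    have hma : lm v ((((2 * n + 1 : ℕ) : ℝ) - 1) * s) ≠ ⊤ := by
      have harg : (((2 * n + 1 : ℕ) : ℝ) - 1) * s = 2 * (n : ℝ) * s := by push_cast; ring
      rw [harg]
      exact ne_top_of_le_ne_top hm0 hmono
    have hstep := step hv hs (2 * n + 1) hma
    have harg1 : (((2 * n + 1 : ℕ) : ℝ) + 1) * s = 2 * ((n + 1 : ℕ) : ℝ) * s := by
      push_cast; ring
    have harg2 : (((2 * n + 1 : ℕ) : ℝ) - 1) * s = 2 * (n : ℝ) * s := by push_cast; ring
    rw [harg1, harg2] at hstep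
    calc lm v (2 * ((n + 1 : ℕ) : ℝ) * s) * ENNReal.ofReal (s ^ 2) ^ (n + 1)
        = (lm v (2 * ((n + 1 : ℕ) : ℝ) * s) * ENNReal.ofReal (s ^ 2))
            * ENNReal.ofReal (s ^ 2) ^ n := by ring
      _ ≤ (9 * lm v (2 * (n : ℝ) * s) * Pk v s (2 * n + 1))
            * ENNReal.ofReal (s ^ 2) ^ n := mul_le_mul_left hstep _
      _ = (9 * Pk v s (2 * n + 1)) * (lm v (2 * (n : ℝ) * s)
            * ENNReal.ofReal (s ^ 2) ^ n) := by ring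
      _ ≤ (9 * Pk v s (2 * n + 1))
            * (9 ^ n * lm v 0 * ∏ j ∈ Finset.range n, Pk v s (2 * j + 1)) :=
          mul_le_mul_right ih _
      _ = 9 ^ (n + 1) * lm v 0 * ∏ j ∈ Finset.range (n + 1), Pk v s (2 * j + 1) := by
          rw [Finset.prod_range_succ]; ring

lemma amgm {n : ℕ} (hn : 1 ≤ n) (p : ℕ → ℝ) (hp : ∀ j, 0 ≤ p j) {E : ℝ} (hE : 0 ≤ E)
    (hsum : ∑ j ∈ Finset.range n, p j ≤ E) :
    ∏ j ∈ Finset.range n, p j ≤ (E / n) ^ n := by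
  have hn0 : (0 : ℝ) < n := by exact_mod_cast hn
  have h1 : ∏ j ∈ Finset.range n, (p j) ^ ((n : ℝ)⁻¹)
      ≤ ∑ j ∈ Finset.range n, (n : ℝ)⁻¹ * p j := by
    apply Real.geom_mean_le_arith_mean_weighted
    · exact fun i _ => by positivity
    · rw [Finset.sum_const, Finset.card_range, nsmul_eq_mul]
      field_simp
    · exact fun i _ => hp i
  have h2 : ∑ j ∈ Finset.range n, (n : ℝ)⁻¹ * p j ≤ E / n := by
    rw [← Finset.mul_sum]
    rw [div_eq_inv_mul]
    gcongr
  have h3 : (∏ j ∈ Finset.range n, p j) ^ ((n : ℝ)⁻¹)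
      = ∏ j ∈ Finset.range n, (p j) ^ ((n : ℝ)⁻¹) :=
    (Real.finset_prod_rpow _ _ (fun i _ => hp i) _).symm
  have h4 : (∏ j ∈ Finset.range n, p j) ^ ((n : ℝ)⁻¹) ≤ E / n := by
    rw [h3]; exact le_trans h1 h2
  have hprod0 : 0 ≤ ∏ j ∈ Finset.range n, p j := Finset.prod_nonneg fun i _ => hp i
  have h5 : ((∏ j ∈ Finset.range n, p j) ^ ((n : ℝ)⁻¹)) ^ n ≤ (E / n) ^ n :=
    pow_le_pow_left₀ (Real.rpow_nonneg hprod0 _) h4 n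
  calc ∏ j ∈ Finset.range n, p j
      = ((∏ j ∈ Finset.range n, p j) ^ ((n : ℝ)⁻¹)) ^ n := by
        rw [← Real.rpow_natCast ((∏ j ∈ Finset.range n, p j) ^ ((n : ℝ)⁻¹)) n,
          ← Real.rpow_mul hprod0]
        rw [inv_mul_cancel₀ (by positivity), Real.rpow_one]
    _ ≤ (E / n) ^ n := h5


lemma decay {v : ℝ → ℝ} (hv : Measurable v) (hm0 : lm v 0 ≠ ⊤) {E : ℝ} (hE : 0 < E)
    (heps : eps v ≤ ENNReal.ofReal E) {t : ℝ} (ht : 0 < t) {n : ℕ} (hn : 1 ≤ n) :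
    lm v t ≤ lm v 0 * ENNReal.ofReal ((36 * E * n / t ^ 2) ^ n) := by
  have hn0 : (0 : ℝ) < n := by exact_mod_cast hn
  set s := t / (2 * n) with hss
  have hs : 0 < s := by positivity
  have h2ns : 2 * (n : ℝ) * s = t := by rw [hss]; field_simp
  -- products
  have hPle : ∀ j : ℕ, Pk v s (2 * j + 1) ≤ ENNReal.ofReal E :=
    fun j => le_trans (Pk_le_eps hv hs (by omega)) heps
  have hPne : ∀ j : ℕ, Pk v s (2 * j + 1) ≠ ⊤ :=
    fun j => ne_top_of_le_ne_top ENNReal.ofReal_ne_top (hPle j)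
  set p := fun j : ℕ => (Pk v s (2 * j + 1)).toReal with hpp
  have hp0 : ∀ j, 0 ≤ p j := fun j => ENNReal.toReal_nonneg
  have hPeq : ∀ j : ℕ, Pk v s (2 * j + 1) = ENNReal.ofReal (p j) :=
    fun j => (ENNReal.ofReal_toReal (hPne j)).symm
  -- sum bound
  have hsumE : ∑ j ∈ Finset.range n, p j ≤ E := by
    have h1 : ∑ j ∈ Finset.range n, Pk v s (2 * j + 1) ≤ eps v := by
      have himg : ∑ j ∈ Finset.range n, Pk v s (2 * j + 1)
          = ∑ k ∈ (Finset.range n).image (fun j => 2 * j + 1), Pk v s k := by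
        rw [Finset.sum_image (by intro a _ b _ h; have h' : 2 * a + 1 = 2 * b + 1 := h; omega)]
      rw [himg]
      refine le_trans (Finset.sum_le_sum_of_subset ?_) (sum_Pk_le hv hs (2 * n))
      intro k hk
      simp only [Finset.mem_image, Finset.mem_range] at hk
      obtain ⟨j, hj, rfl⟩ := hk
      rw [Finset.mem_Icc]
      omega
    have h2 : ENNReal.ofReal (∑ j ∈ Finset.range n, p j) ≤ ENNReal.ofReal E := by
      rw [ENNReal.ofReal_sum_of_nonneg (fun i _ => hp0 i)]
      calc ∑ j ∈ Finset.range n, ENNReal.ofReal (p j)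
          = ∑ j ∈ Finset.range n, Pk v s (2 * j + 1) :=
            Finset.sum_congr rfl (fun j _ => (hPeq j).symm)
        _ ≤ eps v := h1
        _ ≤ ENNReal.ofReal E := heps
    exact (ENNReal.ofReal_le_ofReal_iff hE.le).mp h2
  have hprodle : ∏ j ∈ Finset.range n, p j ≤ (E / n) ^ n := amgm hn p hp0 hE.le hsumE
  have hprod : ∏ j ∈ Finset.range n, Pk v s (2 * j + 1)
      ≤ ENNReal.ofReal ((E / n) ^ n) := by
    calc ∏ j ∈ Finset.range n, Pk v s (2 * j + 1)
        = ENNReal.ofReal (∏ j ∈ Finset.range n, p j) := by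
          rw [ENNReal.ofReal_prod_of_nonneg (fun i _ => hp0 i)]
          exact Finset.prod_congr rfl (fun j _ => hPeq j)
      _ ≤ ENNReal.ofReal ((E / n) ^ n) := ENNReal.ofReal_le_ofReal hprodle
  -- chain
  have hchain := chain hv hs hm0 n
  rw [h2ns] at hchain
  have hq0 : (ENNReal.ofReal (s ^ 2)) ^ n ≠ 0 := by
    apply pow_ne_zero
    rw [ne_eq, ENNReal.ofReal_eq_zero, not_le]
    positivity
  have hqtop : (ENNReal.ofReal (s ^ 2)) ^ n ≠ ⊤ :=
    ENNReal.pow_ne_top ENNReal.ofReal_ne_top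
  rw [← ENNReal.mul_le_mul_iff_left hq0 hqtop]
  have e1 : (9 : ℝ≥0∞) ^ n = ENNReal.ofReal ((9 : ℝ) ^ n) := by
    rw [ENNReal.ofReal_pow (by norm_num)]
    norm_num
  have e2 : (ENNReal.ofReal (s ^ 2)) ^ n = ENNReal.ofReal ((s ^ 2) ^ n) :=
    (ENNReal.ofReal_pow (sq_nonneg s) n).symm
  have ereal : (9 : ℝ) ^ n * (E / n) ^ n = (36 * E * n / t ^ 2) ^ n * (s ^ 2) ^ n := by
    rw [← mul_pow, ← mul_pow]
    congr 1
    rw [hss]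
    field_simp
    ring
  calc lm v t * ENNReal.ofReal (s ^ 2) ^ n
      ≤ 9 ^ n * lm v 0 * ∏ j ∈ Finset.range n, Pk v s (2 * j + 1) := hchain
    _ ≤ 9 ^ n * lm v 0 * ENNReal.ofReal ((E / n) ^ n) := mul_le_mul_right hprod _
    _ = lm v 0 * (ENNReal.ofReal ((9 : ℝ) ^ n * (E / n) ^ n)) := by
        rw [e1, ENNReal.ofReal_mul (by positivity)]
        ring
    _ = lm v 0 * ENNReal.ofReal ((36 * E * n / t ^ 2) ^ n) * ENNReal.ofReal (s ^ 2) ^ n := by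
        rw [ereal, e2, ENNReal.ofReal_mul (by positivity)]
        ring

lemma gauss {v : ℝ → ℝ} (hv : Measurable v) (hm0 : lm v 0 ≠ ⊤) {E R : ℝ} (hE : 0 < E)
    (hR : 1 ≤ R) (heps : eps v ≤ ENNReal.ofReal E)
    (hER : 36 * E * R ≤ Real.exp (-1)) {t : ℝ} (ht : 1 ≤ t) :
    lm v t ≤ lm v 0 * ENNReal.ofReal (Real.exp (1 - R * t ^ 2)) := by
  set n := ⌊R * t ^ 2⌋₊ with hnn
  have hRt1 : 1 ≤ R * t ^ 2 := by nlinarith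
  have hn1 : 1 ≤ n := Nat.le_floor (by exact_mod_cast hRt1)
  have hnle : (n : ℝ) ≤ R * t ^ 2 := Nat.floor_le (by positivity)
  have hnge : R * t ^ 2 < (n : ℝ) + 1 := Nat.lt_floor_add_one _
  have ht0 : 0 < t := by linarith
  have hd := decay hv hm0 hE heps ht0 hn1
  refine le_trans hd (mul_le_mul_right (ENNReal.ofReal_le_ofReal ?_) _)
  have h1 : 36 * E * (n : ℝ) / t ^ 2 ≤ 36 * E * R := by
    rw [div_le_iff₀ (by positivity)]
    nlinarith
  calc (36 * E * (n : ℝ) / t ^ 2) ^ n ≤ (Real.exp (-1)) ^ n := by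
        apply pow_le_pow_left₀ (by positivity) (le_trans h1 hER)
    _ = Real.exp (-(n : ℝ)) := by
        rw [← Real.exp_nat_mul]
        congr 1
        ring
    _ ≤ Real.exp (1 - R * t ^ 2) := by
        apply Real.exp_le_exp.mpr
        linarith


lemma ae_fst {f g : ℝ → ℝ} (h : f =ᵐ[volume] g) :
    (fun p : ℝ × ℝ => f p.1) =ᵐ[volume] (fun p : ℝ × ℝ => g p.1) := by
  have hnull : volume {x : ℝ | f x ≠ g x} = 0 := ae_iff.mp h
  obtain ⟨t, ht1, ht2, ht3⟩ := exists_measurable_superset_of_null hnull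
  apply ae_iff.mpr
  refine measure_mono_null (fun p hp => ?_)
    (show volume (t ×ˢ (Set.univ : Set ℝ)) = 0 by
      rw [Measure.volume_eq_prod, Measure.prod_prod, ht3, zero_mul])
  exact ⟨ht1 hp, Set.mem_univ _⟩

lemma ae_snd {f g : ℝ → ℝ} (h : f =ᵐ[volume] g) :
    (fun p : ℝ × ℝ => f p.2) =ᵐ[volume] (fun p : ℝ × ℝ => g p.2) := by
  have hnull : volume {x : ℝ | f x ≠ g x} = 0 := ae_iff.mp h
  obtain ⟨t, ht1, ht2, ht3⟩ := exists_measurable_superset_of_null hnull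
  apply ae_iff.mpr
  refine measure_mono_null (fun p hp => ?_)
    (show volume ((Set.univ : Set ℝ) ×ˢ t) = 0 by
      rw [Measure.volume_eq_prod, Measure.prod_prod, ht3, mul_zero])
  exact ⟨Set.mem_univ _, ht1 hp⟩

/-- quotient-by-nonneg monotonicity, allowing a zero denominator -/
lemma div_mono_num {a b d : ℝ} (hd : 0 ≤ d) (h : a ≤ b) : a / d ≤ b / d := by
  rcases eq_or_lt_of_le hd with h0 | h0
  · rw [← h0, div_zero, div_zero]
  · gcongr


end ExpAux

def memH12' (u : ℝ → ℝ) : Prop :=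
  Integrable (fun x : ℝ => (u x) ^ 2) ∧
  Integrable (fun p : ℝ × ℝ => (u p.1 - u p.2) ^ 2 / |p.1 - p.2| ^ 2)

open ExpAux in
set_option maxHeartbeats 1000000 in
theorem exp_integral_finite' (β : ℝ) (hβ : 0 < β) (u : ℝ → ℝ) (hu : memH12' u) :
    (∫⁻ x : ℝ, ENNReal.ofReal (Real.exp (β * (u x) ^ 2) - 1)) < ⊤ := by
  classical
  -- measurable representative of |u|
  obtain ⟨g, hgm, hg⟩ : ∃ g : ℝ → ℝ, Measurable g ∧ (fun x => (u x) ^ 2) =ᵐ[volume] g := by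
    have h := hu.1.aestronglyMeasurable.aemeasurable
    exact ⟨h.mk _, h.measurable_mk, h.ae_eq_mk⟩
  set w := fun x => Real.sqrt (g x) with hww
  have hwm : Measurable w := hgm.sqrt
  have hw0 : ∀ x, 0 ≤ w x := fun x => Real.sqrt_nonneg _
  have hwu : w =ᵐ[volume] (fun x => |u x|) := by
    filter_upwards [hg] with x hx
    show Real.sqrt (g x) = |u x|
    rw [← hx, Real.sqrt_sq_eq_abs]
  have hw2 : (fun x => w x ^ 2) =ᵐ[volume] (fun x => u x ^ 2) := by
    filter_upwards [hwu] with x hx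
    show w x ^ 2 = u x ^ 2
    rw [hx]
    exact sq_abs _
  -- L² bound
  have hL2 : ∫⁻ x, ENNReal.ofReal (w x ^ 2) < ⊤ := by
    calc ∫⁻ x, ENNReal.ofReal (w x ^ 2)
        = ∫⁻ x, ENNReal.ofReal (u x ^ 2) := lintegral_congr_ae
          (by filter_upwards [hw2] with x hx; rw [hx])
      _ ≤ ∫⁻ x, (‖u x ^ 2‖₊ : ℝ≥0∞) := lintegral_mono fun x => Real.ofReal_le_enorm _
      _ < ⊤ := hu.1.hasFiniteIntegral
  -- kernel bound
  have hKu : ∫⁻ p : ℝ × ℝ, ENNReal.ofReal ((u p.1 - u p.2) ^ 2 / |p.1 - p.2| ^ 2) < ⊤ := by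
    calc ∫⁻ p : ℝ × ℝ, ENNReal.ofReal ((u p.1 - u p.2) ^ 2 / |p.1 - p.2| ^ 2)
        ≤ ∫⁻ p : ℝ × ℝ, (‖(u p.1 - u p.2) ^ 2 / |p.1 - p.2| ^ 2‖₊ : ℝ≥0∞) :=
          lintegral_mono fun p => Real.ofReal_le_enorm _
      _ < ⊤ := hu.2.hasFiniteIntegral
  have hKw : ∫⁻ p : ℝ × ℝ, ENNReal.ofReal ((w p.1 - w p.2) ^ 2 / |p.1 - p.2| ^ 2) < ⊤ := by
    refine lt_of_le_of_lt ?_ hKu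
    apply lintegral_mono_ae
    filter_upwards [ae_fst hwu, ae_snd hwu] with p h1 h2
    apply ENNReal.ofReal_le_ofReal
    apply div_mono_num (by positivity)
    rw [h1, h2]
    have habs : |(|u p.1| - |u p.2|)| ≤ |u p.1 - u p.2| := abs_abs_sub_abs_le_abs_sub _ _
    calc (|u p.1| - |u p.2|) ^ 2 = |(|u p.1| - |u p.2|)| ^ 2 := (sq_abs _).symm
      _ ≤ |u p.1 - u p.2| ^ 2 := by gcongr <;> positivity
      _ = (u p.1 - u p.2) ^ 2 := sq_abs _
  -- truncations
  set V : ℕ → ℝ → ℝ := fun M x => max (w x - M) 0 with hVV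
  have hVm : ∀ M : ℕ, Measurable (V M) := fun M =>
    ((hwm.sub measurable_const).max measurable_const)
  have hVmeas : ∀ M : ℕ, Measurable fun p : ℝ × ℝ =>
      ENNReal.ofReal ((V M p.1 - V M p.2) ^ 2 / |p.1 - p.2| ^ 2) := fun M =>
    (((((hVm M).comp measurable_fst).sub ((hVm M).comp measurable_snd)).pow
      measurable_const).div (((measurable_fst.sub measurable_snd).abs).pow
        measurable_const)).ennreal_ofReal
  have hVlew : ∀ M : ℕ, ∀ p : ℝ × ℝ,
      ENNReal.ofReal ((V M p.1 - V M p.2) ^ 2 / |p.1 - p.2| ^ 2)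
      ≤ ENNReal.ofReal ((w p.1 - w p.2) ^ 2 / |p.1 - p.2| ^ 2) := by
    intro M p
    apply ENNReal.ofReal_le_ofReal
    apply div_mono_num (by positivity)
    have h1 : |V M p.1 - V M p.2| ≤ |w p.1 - w p.2| := by
      have := abs_max_sub_max_le_abs (w p.1 - M) (w p.2 - M) 0
      calc |V M p.1 - V M p.2| = |max (w p.1 - M) 0 - max (w p.2 - M) 0| := rfl
        _ ≤ |(w p.1 - M) - (w p.2 - M)| := this
        _ = |w p.1 - w p.2| := by ring_nf
    calc (V M p.1 - V M p.2) ^ 2 = |V M p.1 - V M p.2| ^ 2 := (sq_abs _).symm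
      _ ≤ |w p.1 - w p.2| ^ 2 := by gcongr <;> positivity
      _ = (w p.1 - w p.2) ^ 2 := sq_abs _
  -- ε(M) → 0
  have heps_lim : Tendsto (fun M : ℕ => eps (V M)) atTop (nhds 0) := by
    have hlim : ∀ p : ℝ × ℝ, Tendsto
        (fun M : ℕ => ENNReal.ofReal ((V M p.1 - V M p.2) ^ 2 / |p.1 - p.2| ^ 2))
        atTop (nhds 0) := by
      intro p
      have hev : ∀ᶠ M : ℕ in atTop,
          ENNReal.ofReal ((V M p.1 - V M p.2) ^ 2 / |p.1 - p.2| ^ 2) = 0 := by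
        filter_upwards [eventually_ge_atTop ⌈max (w p.1) (w p.2)⌉₊] with M hM
        have hMr : max (w p.1) (w p.2) ≤ (M : ℝ) :=
          le_trans (Nat.le_ceil _) (Nat.cast_le.mpr hM)
        have e1 : V M p.1 = 0 := by
          apply max_eq_right
          have : w p.1 ≤ (M : ℝ) := le_trans (le_max_left _ _) hMr
          linarith
        have e2 : V M p.2 = 0 := by
          apply max_eq_right
          have : w p.2 ≤ (M : ℝ) := le_trans (le_max_right _ _) hMr
          linarith
        rw [e1, e2, sub_zero]
        norm_num
      refine Tendsto.congr' ?_ tendsto_const_nhds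
      filter_upwards [hev] with M hM
      exact hM.symm
    have h := tendsto_lintegral_of_dominated_convergence
      (F := fun M p => ENNReal.ofReal ((V M p.1 - V M p.2) ^ 2 / |p.1 - p.2| ^ 2))
      (f := fun _ => (0 : ℝ≥0∞))
      (bound := fun p : ℝ × ℝ =>
        ENNReal.ofReal ((w p.1 - w p.2) ^ 2 / |p.1 - p.2| ^ 2))
      (fun M => hVmeas M)
      (fun M => Filter.Eventually.of_forall (hVlew M))
      hKw.ne
      (Filter.Eventually.of_forall hlim)
    rwa [lintegral_zero] at h
  -- parameters
  set R := 4 * β + 1 with hRR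
  have hR1 : (1 : ℝ) ≤ R := by nlinarith
  have hR0 : (0 : ℝ) < R := by linarith
  set E := Real.exp (-1) / (36 * R) with hEE
  have hE : 0 < E := by positivity
  have hER : 36 * E * R ≤ Real.exp (-1) := by
    apply le_of_eq
    rw [hEE]
    field_simp
  -- choose M
  obtain ⟨M, hMe, hM1⟩ : ∃ M : ℕ, eps (V M) < ENNReal.ofReal E ∧ 1 ≤ M := by
    have h1 := heps_lim.eventually_lt_const
      (show (0 : ℝ≥0∞) < ENNReal.ofReal E from ENNReal.ofReal_pos.mpr hE)
    exact ((h1.and (eventually_ge_atTop 1)).exists)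
  set v := V M with hvv
  have hvm : Measurable v := hVm M
  have hM1r : (1 : ℝ) ≤ (M : ℝ) := by exact_mod_cast hM1
  -- level sets
  have hlev : ∀ t : ℝ, 0 ≤ t → {x : ℝ | t < v x} = {x : ℝ | (M : ℝ) + t < w x} := by
    intro t ht
    ext x
    simp only [Set.mem_setOf_eq, hvv, hVV]
    constructor
    · intro h
      rcases lt_max_iff.mp h with h' | h'
      · linarith
      · linarith
    · intro h
      exact lt_max_iff.mpr (Or.inl (by linarith))
  -- m₀ finite
  have hm0le : lm v 0 ≤ ∫⁻ x, ENNReal.ofReal (w x ^ 2) := by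
    have h1 : {x : ℝ | (0 : ℝ) < v x} ⊆ {x : ℝ | 1 ≤ ENNReal.ofReal (w x ^ 2)} := by
      rw [hlev 0 le_rfl]
      intro x hx
      simp only [Set.mem_setOf_eq] at hx ⊢
      rw [ENNReal.one_le_ofReal]
      nlinarith
    calc lm v 0 ≤ volume {x : ℝ | 1 ≤ ENNReal.ofReal (w x ^ 2)} := measure_mono h1
      _ ≤ ∫⁻ x, ENNReal.ofReal (w x ^ 2) := by
          have h2 := mul_meas_ge_le_lintegral₀ (μ := volume)
            (f := fun x => ENNReal.ofReal (w x ^ 2))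
            ((hwm.pow measurable_const).ennreal_ofReal.aemeasurable) 1
          calc volume {x : ℝ | 1 ≤ ENNReal.ofReal (w x ^ 2)}
              = 1 * volume {x : ℝ | 1 ≤ ENNReal.ofReal (w x ^ 2)} := (one_mul _).symm
            _ ≤ ∫⁻ x, ENNReal.ofReal (w x ^ 2) := h2
  have hm0 : lm v 0 ≠ ⊤ := (lt_of_le_of_lt hm0le hL2).ne
  -- gaussian decay
  have hgauss : ∀ t : ℝ, 1 ≤ t →
      lm v t ≤ lm v 0 * ENNReal.ofReal (Real.exp (1 - R * t ^ 2)) :=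
    fun t ht => gauss hvm hm0 hE hR1 hMe.le hER ht
  -- switch to w
  have hcongr : ∫⁻ x, ENNReal.ofReal (Real.exp (β * u x ^ 2) - 1)
      = ∫⁻ x, ENNReal.ofReal (Real.exp (β * w x ^ 2) - 1) := by
    apply lintegral_congr_ae
    filter_upwards [hw2] with x hx
    rw [show w x ^ 2 = u x ^ 2 from hx]
  rw [hcongr]
  set K := 2 * (M : ℝ) + 1 with hKK
  have hK1 : (1 : ℝ) ≤ K := by linarith
  set f := fun x : ℝ => ENNReal.ofReal (Real.exp (β * w x ^ 2) - 1) with hff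
  have hfm : Measurable f :=
    ((Real.measurable_exp.comp (measurable_const.mul (hwm.pow measurable_const))).sub
      measurable_const).ennreal_ofReal
  have hsplit : ∫⁻ x, f x
      = (∫⁻ x in {x : ℝ | w x ≤ K}, f x) + ∫⁻ x in {x : ℝ | w x ≤ K}ᶜ, f x :=
    (lintegral_add_compl f (measB hwm K)).symm
  rw [hsplit]
  -- part 1
  have hpart1 : ∫⁻ x in {x : ℝ | w x ≤ K}, f x
      ≤ ENNReal.ofReal (β * Real.exp (β * K ^ 2)) * ∫⁻ x, ENNReal.ofReal (w x ^ 2) := by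
    have hpt : ∀ x ∈ {x : ℝ | w x ≤ K}, f x
        ≤ ENNReal.ofReal (β * Real.exp (β * K ^ 2)) * ENNReal.ofReal (w x ^ 2) := by
      intro x hx
      simp only [Set.mem_setOf_eq] at hx
      rw [hff]
      simp only []
      rw [← ENNReal.ofReal_mul (by positivity)]
      apply ENNReal.ofReal_le_ofReal
      set z := β * w x ^ 2 with hzz
      have hz0 : 0 ≤ z := by positivity
      have hzK : z ≤ β * K ^ 2 := by
        rw [hzz]
        apply mul_le_mul_of_nonneg_left _ hβ.le
        nlinarith [hw0 x]
      have hexp : Real.exp z - 1 ≤ z * Real.exp z := by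
        have h1 : (-z + 1) * Real.exp z ≤ Real.exp (-z) * Real.exp z :=
          mul_le_mul_of_nonneg_right (Real.add_one_le_exp (-z)) (Real.exp_pos z).le
        have h2 : Real.exp (-z) * Real.exp z = 1 := by
          rw [← Real.exp_add]
          simp
        nlinarith
      calc Real.exp z - 1 ≤ z * Real.exp z := hexp
        _ ≤ z * Real.exp (β * K ^ 2) :=
            mul_le_mul_of_nonneg_left (Real.exp_le_exp.mpr hzK) hz0
        _ = β * Real.exp (β * K ^ 2) * w x ^ 2 := by rw [hzz]; ring
    calc ∫⁻ x in {x : ℝ | w x ≤ K}, f x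
        ≤ ∫⁻ x in {x : ℝ | w x ≤ K},
            ENNReal.ofReal (β * Real.exp (β * K ^ 2)) * ENNReal.ofReal (w x ^ 2) :=
          setLIntegral_mono
            (measurable_const.mul (hwm.pow measurable_const).ennreal_ofReal) hpt
      _ ≤ ∫⁻ x in (Set.univ : Set ℝ),
            ENNReal.ofReal (β * Real.exp (β * K ^ 2)) * ENNReal.ofReal (w x ^ 2) :=
          lintegral_mono_set (Set.subset_univ _)
      _ = ENNReal.ofReal (β * Real.exp (β * K ^ 2)) * ∫⁻ x, ENNReal.ofReal (w x ^ 2) := by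
          rw [setLIntegral_univ]
          exact lintegral_const_mul _ (hwm.pow measurable_const).ennreal_ofReal
  -- part 2 : shells
  set S : ℕ → Set ℝ := fun j => {x : ℝ | K + j < w x ∧ w x ≤ K + j + 1} with hSS
  have hSm : ∀ j : ℕ, MeasurableSet (S j) := fun j =>
    (measurableSet_lt measurable_const hwm).inter (measurableSet_le hwm measurable_const)
  have hcover : {x : ℝ | w x ≤ K}ᶜ ⊆ ⋃ j, S j := by
    intro x hx
    simp only [Set.mem_compl_iff, Set.mem_setOf_eq, not_le] at hx
    set d := w x - K with hdd
    have hd : 0 < d := by linarith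
    have hc1 : 1 ≤ ⌈d⌉₊ := Nat.one_le_ceil_iff.mpr hd
    have hcast : ((⌈d⌉₊ - 1 : ℕ) : ℝ) = (⌈d⌉₊ : ℝ) - 1 := by
      rw [Nat.cast_sub hc1]
      norm_num
    refine Set.mem_iUnion.mpr ⟨⌈d⌉₊ - 1, ?_, ?_⟩
    · rw [hcast]
      have h2 : (⌈d⌉₊ : ℝ) < d + 1 := Nat.ceil_lt_add_one hd.le
      linarith
    · rw [hcast]
      have h2 : d ≤ (⌈d⌉₊ : ℝ) := Nat.le_ceil _
      linarith
  set r : ℝ≥0∞ := ENNReal.ofReal (Real.exp (-1)) with hrr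
  set c : ℝ≥0∞ := lm v 0 * ENNReal.ofReal (Real.exp (-(M : ℝ))) with hcc
  have hterm : ∀ j : ℕ, ∫⁻ x in S j, f x ≤ c * r ^ j := by
    intro j
    set T := (M : ℝ) + 1 + j with hTT
    have hT1 : (1 : ℝ) ≤ T := by
      rw [hTT]
      have : (0:ℝ) ≤ (j:ℝ) := Nat.cast_nonneg j
      linarith
    have hTM : (M : ℝ) + 1 ≤ T := by
      rw [hTT]
      have : (0:ℝ) ≤ (j:ℝ) := Nat.cast_nonneg j
      linarith
    have hKj1 : K + (j : ℝ) + 1 = (M : ℝ) + T + 1 := by rw [hKK, hTT]; ring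
    -- pointwise bound on the shell
    have hpt : ∀ x ∈ S j, f x ≤ ENNReal.ofReal (Real.exp (β * (K + j + 1) ^ 2)) := by
      intro x hx
      obtain ⟨hx1, hx2⟩ := hx
      rw [hff]
      apply ENNReal.ofReal_le_ofReal
      have hwx : β * w x ^ 2 ≤ β * (K + j + 1) ^ 2 := by
        apply mul_le_mul_of_nonneg_left _ hβ.le
        have h0 : 0 ≤ w x := hw0 x
        nlinarith
      have := Real.exp_le_exp.mpr hwx
      linarith
    have step1 : ∫⁻ x in S j, f x
        ≤ ENNReal.ofReal (Real.exp (β * (K + j + 1) ^ 2)) * volume (S j) := by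
      calc ∫⁻ x in S j, f x
          ≤ ∫⁻ _ in S j, ENNReal.ofReal (Real.exp (β * (K + j + 1) ^ 2)) :=
            setLIntegral_mono measurable_const hpt
        _ = ENNReal.ofReal (Real.exp (β * (K + j + 1) ^ 2)) * volume (S j) :=
            setLIntegral_const _ _
    have step2 : volume (S j) ≤ lm v T := by
      have hsub : S j ⊆ {x : ℝ | (M : ℝ) + T < w x} := by
        intro x hx
        have h1 : K + (j : ℝ) < w x := hx.1
        have h2 : K + (j : ℝ) = (M : ℝ) + T := by rw [hKK, hTT]; ring
        simp only [Set.mem_setOf_eq]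
        linarith
      calc volume (S j) ≤ volume {x : ℝ | (M : ℝ) + T < w x} := measure_mono hsub
        _ = lm v T := by rw [← hlev T (by linarith)]; rfl
    have step3 : lm v T ≤ lm v 0 * ENNReal.ofReal (Real.exp (1 - R * T ^ 2)) := hgauss T hT1
    -- exponent comparison
    have hexpc : Real.exp (β * (K + j + 1) ^ 2) * Real.exp (1 - R * T ^ 2)
        ≤ Real.exp (-(M : ℝ)) * Real.exp (-1) ^ j := by
      rw [← Real.exp_add]
      have e1 : Real.exp (-1 : ℝ) ^ j = Real.exp (-(j : ℝ)) := by
        rw [← Real.exp_nat_mul]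
        congr 1
        ring
      rw [e1, ← Real.exp_add]
      apply Real.exp_le_exp.mpr
      -- need : β (M+T+1)² + 1 - R T² ≤ -M - j
      have h2T : (M : ℝ) + T + 1 ≤ 2 * T := by linarith
      have hpos : (0 : ℝ) ≤ (M : ℝ) + T + 1 := by linarith
      have hsq : ((M : ℝ) + T + 1) ^ 2 ≤ (2 * T) ^ 2 := by nlinarith
      have hb1 : β * (K + (j : ℝ) + 1) ^ 2 ≤ 4 * β * T ^ 2 := by
        rw [hKj1]
        nlinarith
      have hTT2 : T ≤ T ^ 2 := by nlinarith
      have hMTj : -(M : ℝ) + -(j : ℝ) = 1 - T := by rw [hTT]; ring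
      rw [hMTj, hRR]
      nlinarith
    calc ∫⁻ x in S j, f x
        ≤ ENNReal.ofReal (Real.exp (β * (K + j + 1) ^ 2)) * volume (S j) := step1
      _ ≤ ENNReal.ofReal (Real.exp (β * (K + j + 1) ^ 2)) * lm v T :=
          mul_le_mul_right step2 _
      _ ≤ ENNReal.ofReal (Real.exp (β * (K + j + 1) ^ 2))
            * (lm v 0 * ENNReal.ofReal (Real.exp (1 - R * T ^ 2))) :=
          mul_le_mul_right step3 _
      _ = lm v 0 * ENNReal.ofReal (Real.exp (β * (K + j + 1) ^ 2)
            * Real.exp (1 - R * T ^ 2)) := by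
          rw [ENNReal.ofReal_mul (Real.exp_nonneg _)]
          ring
      _ ≤ lm v 0 * ENNReal.ofReal (Real.exp (-(M : ℝ)) * Real.exp (-1) ^ j) :=
          mul_le_mul_right (ENNReal.ofReal_le_ofReal hexpc) _
      _ = c * r ^ j := by
          rw [hcc, hrr, ENNReal.ofReal_mul (Real.exp_nonneg _),
            ENNReal.ofReal_pow (Real.exp_nonneg _)]
          ring
  have hpart2 : ∫⁻ x in {x : ℝ | w x ≤ K}ᶜ, f x ≤ c * (1 - r)⁻¹ := by
    calc ∫⁻ x in {x : ℝ | w x ≤ K}ᶜ, f x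
        ≤ ∫⁻ x in ⋃ j, S j, f x := lintegral_mono_set hcover
      _ ≤ ∑' j : ℕ, ∫⁻ x in S j, f x := lintegral_iUnion_le _ _
      _ ≤ ∑' j : ℕ, c * r ^ j := ENNReal.tsum_le_tsum hterm
      _ = c * ∑' j : ℕ, r ^ j := ENNReal.tsum_mul_left
      _ = c * (1 - r)⁻¹ := by rw [ENNReal.tsum_geometric]
  -- conclusion
  have hfin1 : ENNReal.ofReal (β * Real.exp (β * K ^ 2)) * ∫⁻ x, ENNReal.ofReal (w x ^ 2) < ⊤ :=
    ENNReal.mul_lt_top ENNReal.ofReal_lt_top hL2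
  have hr1 : r < 1 := by
    rw [hrr, ← ENNReal.ofReal_one]
    exact (ENNReal.ofReal_lt_ofReal_iff (by norm_num)).mpr
      (Real.exp_lt_one_iff.mpr (by norm_num))
  have hfin2 : c * (1 - r)⁻¹ < ⊤ := by
    apply ENNReal.mul_lt_top
    · exact ENNReal.mul_lt_top hm0.lt_top ENNReal.ofReal_lt_top
    · rw [ENNReal.inv_lt_top]
      exact tsub_pos_iff_lt.mpr hr1
  exact ENNReal.add_lt_top.mpr ⟨lt_of_le_of_lt hpart1 hfin1, lt_of_le_of_lt hpart2 hfin2⟩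


/-- for every `β > 0` and `u ∈ H^{1/2}(ℝ)`,
`∫ (e^{βu²} − 1) dx` is finite. -/
theorem exp_integral_finite (β : ℝ) (hβ : 0 < β) (u : ℝ → ℝ) (hu : memH12 u) :
    (∫⁻ x : ℝ, ENNReal.ofReal (Real.exp (β * (u x) ^ 2) - 1)) < ⊤ :=
  exp_integral_finite' β hβ u ⟨hu.1, hu.2⟩
end
end

section
/- Let (u_n) be a sequence in L²(ℝ) and u ∈ L²(ℝ), u ≠ 0, such that u_n → u pointwise almost everywhere on ℝ. Let (v_n) be a bounded sequence in L²(ℝ) such that sup_n A(u_n², v_n²) < ∞, where A(w,z) = ∬_{ℝ×ℝ} ln(1+|x−y|) w(x) z(y) dx dy. Then there exist n₀ ∈ ℕ and C > 0 such that ‖v_n‖_* < C for every n ≥ n₀, where ‖v‖_*² = ∫_ℝ ln(1+|x|) v(x)² dx. Moreover, if in addition A(u_n², v_n²) → 0 and ‖v_n‖_{L²} → 0 as n → ∞, then ‖v_n‖_* → 0 as n → ∞. -/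
open MeasureTheory Real Filter

noncomputable section

/-- The bilinear form `A(w,z) = ∬ ln(1+|x−y|) w(x) z(y) dx dy`, as a value in `[0,∞]`. -/
def Alin (w z : ℝ → ℝ) : ENNReal :=
  ∫⁻ p : ℝ × ℝ, ENNReal.ofReal (Real.log (1 + |p.1 - p.2|) * w p.1 * z p.2)

/-- `‖v‖_*² = ∫ ln(1+|x|) v(x)² dx`, as a value in `[0,∞]`. -/
def starLin (v : ℝ → ℝ) : ENNReal :=
  ∫⁻ x : ℝ, ENNReal.ofReal (Real.log (1 + |x|) * (v x) ^ 2)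

open scoped ENNReal NNReal

lemma log_one_add_le (a b : ℝ) (ha : 0 ≤ a) (hb : 0 ≤ b) :
    Real.log (1 + (a + b)) ≤ Real.log (1 + a) + Real.log (1 + b) := by
  rw [← Real.log_mul (by positivity) (by positivity)]
  apply Real.log_le_log (by positivity)
  nlinarith

lemma log_triangle (x y : ℝ) :
    Real.log (1 + |y|) ≤ Real.log (1 + |x - y|) + Real.log (1 + |x|) := by
  calc Real.log (1 + |y|) ≤ Real.log (1 + (|x - y| + |x|)) := by
        apply Real.log_le_log (by positivity)
        have : |y| ≤ |x - y| + |x| := by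
          have h := abs_sub (x - y) x
          simp only [sub_sub_cancel_left, abs_neg] at h
          exact h
        linarith
    _ ≤ Real.log (1 + |x - y|) + Real.log (1 + |x|) :=
        log_one_add_le _ _ (abs_nonneg _) (abs_nonneg _)

lemma key_estimate (a b : ℝ → ℝ) (ha : Measurable a) (hb : Measurable b)
    (B : Set ℝ) (hBm : MeasurableSet B) (R δ T : ℝ) (hR : 0 ≤ R) (hδ : 0 ≤ δ)
    (hBR : ∀ x ∈ B, |x| ≤ R) (haB : ∀ x ∈ B, δ ≤ |a x| ∧ |a x| ≤ T) :
    ENNReal.ofReal (δ ^ 2) * volume B * starLin b ≤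
      Alin (fun x => a x ^ 2) (fun x => b x ^ 2) +
      ENNReal.ofReal (Real.log (1 + R) * T ^ 2) * volume B *
        ∫⁻ y, ENNReal.ofReal ((b y) ^ 2) := by
  set F : ℝ → ℝ → ℝ≥0∞ := fun x y =>
    ENNReal.ofReal (Real.log (1 + |x - y|) * (a x) ^ 2 * (b y) ^ 2) with hF
  have hFm : Measurable (fun p : ℝ × ℝ => F p.1 p.2) := by
    apply Measurable.ennreal_ofReal
    exact ((Real.measurable_log.comp
        ((measurable_const.add ((measurable_fst.sub measurable_snd).abs)))).mul
      ((ha.comp measurable_fst).pow_const 2)).mul ((hb.comp measurable_snd).pow_const 2)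
  have ham2 : Measurable fun x => ENNReal.ofReal ((a x) ^ 2) :=
    (ha.pow_const 2).ennreal_ofReal
  have hbm2 : Measurable fun y => ENNReal.ofReal ((b y) ^ 2) :=
    (hb.pow_const 2).ennreal_ofReal
  have hgm : Measurable fun y => ENNReal.ofReal (Real.log (1 + |y|) * (b y) ^ 2) :=
    ((Real.measurable_log.comp (measurable_const.add measurable_abs)).mul
      (hb.pow_const 2)).ennreal_ofReal
  set K0 : ℝ≥0∞ := ENNReal.ofReal (Real.log (1 + R) * T ^ 2) * volume B with hK0
  have hlogR : 0 ≤ Real.log (1 + R) := Real.log_nonneg (by linarith)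
  have hpt : ∀ y : ℝ,
      ENNReal.ofReal (δ ^ 2) * volume B *
        ENNReal.ofReal (Real.log (1 + |y|) * (b y) ^ 2) ≤
      (∫⁻ x, F x y) + K0 * ENNReal.ofReal ((b y) ^ 2) := by
    intro y
    have hly : 0 ≤ Real.log (1 + |y|) := Real.log_nonneg (by linarith [abs_nonneg y])
    have hg0 : 0 ≤ Real.log (1 + |y|) * (b y) ^ 2 := mul_nonneg hly (sq_nonneg _)
    have step1 : ENNReal.ofReal (δ ^ 2) * volume B ≤
        ∫⁻ x in B, ENNReal.ofReal ((a x) ^ 2) := by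
      rw [← setLIntegral_const B (ENNReal.ofReal (δ ^ 2))]
      apply setLIntegral_mono ham2
      intro x hx
      apply ENNReal.ofReal_le_ofReal
      have h1 := (haB x hx).1
      calc δ ^ 2 ≤ |a x| ^ 2 := pow_le_pow_left₀ hδ h1 2
        _ = (a x) ^ 2 := sq_abs _
    calc ENNReal.ofReal (δ ^ 2) * volume B *
          ENNReal.ofReal (Real.log (1 + |y|) * (b y) ^ 2)
        ≤ (∫⁻ x in B, ENNReal.ofReal ((a x) ^ 2)) *
            ENNReal.ofReal (Real.log (1 + |y|) * (b y) ^ 2) :=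
          mul_le_mul_left step1 _
      _ = ∫⁻ x in B, ENNReal.ofReal ((a x) ^ 2 * (Real.log (1 + |y|) * (b y) ^ 2)) := by
          rw [← lintegral_mul_const _ ham2]
          exact lintegral_congr fun x => (ENNReal.ofReal_mul (sq_nonneg _)).symm
      _ ≤ ∫⁻ x in B, (F x y + ENNReal.ofReal (Real.log (1 + R) * T ^ 2 * (b y) ^ 2)) := by
          apply setLIntegral_mono ((hFm.comp measurable_prodMk_right).add measurable_const)
          intro x hx
          have hxR := hBR x hx
          have haT := (haB x hx).2
          have hreal : (a x) ^ 2 * (Real.log (1 + |y|) * (b y) ^ 2) ≤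
              Real.log (1 + |x - y|) * (a x) ^ 2 * (b y) ^ 2 +
              Real.log (1 + R) * T ^ 2 * (b y) ^ 2 := by
            have h1 : Real.log (1 + |y|) ≤ Real.log (1 + |x - y|) + Real.log (1 + R) := by
              have h0 := log_triangle x y
              have h2 : Real.log (1 + |x|) ≤ Real.log (1 + R) :=
                Real.log_le_log (by linarith [abs_nonneg x]) (by linarith)
              linarith
            have haT2 : (a x) ^ 2 ≤ T ^ 2 := by
              rw [← sq_abs (a x)]
              exact pow_le_pow_left₀ (abs_nonneg _) haT 2
            have hlog1 : 0 ≤ Real.log (1 + |x - y|) :=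
              Real.log_nonneg (by linarith [abs_nonneg (x - y)])
            have e1 : (a x) ^ 2 * (Real.log (1 + |y|) * (b y) ^ 2) ≤
                (a x) ^ 2 * ((Real.log (1 + |x - y|) + Real.log (1 + R)) * (b y) ^ 2) :=
              mul_le_mul_of_nonneg_left
                (mul_le_mul_of_nonneg_right h1 (sq_nonneg _)) (sq_nonneg _)
            have e2 : (a x) ^ 2 * ((Real.log (1 + |x - y|) + Real.log (1 + R)) * (b y) ^ 2)
                = Real.log (1 + |x - y|) * (a x) ^ 2 * (b y) ^ 2 +
                  Real.log (1 + R) * ((a x) ^ 2 * (b y) ^ 2) := by ring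
            have e3 : Real.log (1 + R) * ((a x) ^ 2 * (b y) ^ 2) ≤
                Real.log (1 + R) * (T ^ 2 * (b y) ^ 2) :=
              mul_le_mul_of_nonneg_left
                (mul_le_mul_of_nonneg_right haT2 (sq_nonneg _)) hlogR
            have e4 : Real.log (1 + R) * (T ^ 2 * (b y) ^ 2)
                = Real.log (1 + R) * T ^ 2 * (b y) ^ 2 := by ring
            linarith [e1, e2, e3, e4]
          calc ENNReal.ofReal ((a x) ^ 2 * (Real.log (1 + |y|) * (b y) ^ 2))
              ≤ ENNReal.ofReal (Real.log (1 + |x - y|) * (a x) ^ 2 * (b y) ^ 2 +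
                  Real.log (1 + R) * T ^ 2 * (b y) ^ 2) := ENNReal.ofReal_le_ofReal hreal
            _ ≤ _ := ENNReal.ofReal_add_le
      _ = (∫⁻ x in B, F x y) +
            ENNReal.ofReal (Real.log (1 + R) * T ^ 2 * (b y) ^ 2) * volume B := by
          rw [lintegral_add_right _ measurable_const, setLIntegral_const]
      _ ≤ (∫⁻ x, F x y) + K0 * ENNReal.ofReal ((b y) ^ 2) := by
          apply add_le_add (setLIntegral_le_lintegral _ _)
          rw [hK0, ENNReal.ofReal_mul (mul_nonneg hlogR (sq_nonneg T)),
            mul_right_comm]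
  calc ENNReal.ofReal (δ ^ 2) * volume B * starLin b
      = ∫⁻ y, ENNReal.ofReal (δ ^ 2) * volume B *
          ENNReal.ofReal (Real.log (1 + |y|) * (b y) ^ 2) :=
        (lintegral_const_mul _ hgm).symm
    _ ≤ ∫⁻ y, ((∫⁻ x, F x y) + K0 * ENNReal.ofReal ((b y) ^ 2)) := lintegral_mono hpt
    _ = (∫⁻ y, ∫⁻ x, F x y) + ∫⁻ y, K0 * ENNReal.ofReal ((b y) ^ 2) := by
        rw [lintegral_add_right]
        exact hbm2.const_mul K0
    _ = Alin (fun x => a x ^ 2) (fun x => b x ^ 2) +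
        K0 * ∫⁻ y, ENNReal.ofReal ((b y) ^ 2) := by
        rw [lintegral_const_mul K0 hbm2]
        congr 1
        rw [Alin, Measure.volume_eq_prod, lintegral_prod_symm' _ hFm]

-- good set construction
lemma exists_good_set (w' : ℝ → ℝ) (hw' : Measurable w')
    (h0 : 0 < volume {x : ℝ | w' x ≠ 0}) :
    ∃ (B : Set ℝ) (R δ₀ : ℝ), MeasurableSet B ∧ 0 < δ₀ ∧ 0 ≤ R ∧
      0 < volume B ∧ volume B ≠ ⊤ ∧
      (∀ x ∈ B, |x| ≤ R) ∧ (∀ x ∈ B, δ₀ ≤ |w' x| ∧ |w' x| ≤ R) := by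
  set A : ℕ → Set ℝ := fun k =>
    {x : ℝ | |x| ≤ (k : ℝ) + 1 ∧ 1 / ((k : ℝ) + 1) ≤ |w' x| ∧ |w' x| ≤ (k : ℝ) + 1} with hA
  have hAm : ∀ k, MeasurableSet (A k) := by
    intro k
    apply MeasurableSet.inter (measurable_abs measurableSet_Iic)
    exact MeasurableSet.inter ((hw'.abs) measurableSet_Ici) ((hw'.abs) measurableSet_Iic)
  have hmono : Monotone A := by
    intro k l hkl x hx
    obtain ⟨h1, h2, h3⟩ := hx
    have hkl' : (k : ℝ) + 1 ≤ (l : ℝ) + 1 := by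
      have := (Nat.cast_le (α := ℝ)).2 hkl; linarith
    refine ⟨le_trans h1 hkl', le_trans ?_ h2, le_trans h3 hkl'⟩
    apply one_div_le_one_div_of_le (by positivity) hkl'
  have hunion : (⋃ k, A k) = {x : ℝ | w' x ≠ 0} := by
    ext x
    simp only [Set.mem_iUnion, Set.mem_setOf_eq]
    constructor
    · rintro ⟨k, h1, h2, h3⟩ h
      rw [h] at h2
      simp at h2
      have : (0:ℝ) < 1 / ((k : ℝ) + 1) := by positivity
      linarith
    · intro h
      have hwx : 0 < |w' x| := abs_pos.2 h
      obtain ⟨k, hk⟩ := exists_nat_ge (max |x| (max |w' x| (1 / |w' x|)))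
      refine ⟨k, ?_, ?_, ?_⟩
      · have := le_max_left |x| (max |w' x| (1 / |w' x|)); linarith
      · have h1 : 1 / |w' x| ≤ (k : ℝ) + 1 := by
          have := le_trans (le_max_right |w' x| (1 / |w' x|))
            (le_max_right |x| (max |w' x| (1 / |w' x|))); linarith
        have h1' : (1:ℝ) ≤ ((k : ℝ) + 1) * |w' x| := (div_le_iff₀ hwx).1 h1
        apply (div_le_iff₀ (by positivity)).2
        linarith [mul_comm ((k : ℝ) + 1) |w' x|]
      · have := le_trans (le_max_left |w' x| (1 / |w' x|))
          (le_max_right |x| (max |w' x| (1 / |w' x|))); linarith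
  have hsup : volume {x : ℝ | w' x ≠ 0} = ⨆ k, volume (A k) := by
    rw [← hunion]
    exact Directed.measure_iUnion hmono.directed_le
  rw [hsup] at h0
  obtain ⟨k, hk⟩ := lt_iSup_iff.mp h0
  refine ⟨A k, (k : ℝ) + 1, 1 / ((k : ℝ) + 1), hAm k, by positivity, by positivity, hk, ?_,
    fun x hx => hx.1, fun x hx => ⟨hx.2.1, hx.2.2⟩⟩
  have hsub : A k ⊆ Set.Icc (-((k : ℝ) + 1)) ((k : ℝ) + 1) := by
    intro x hx
    exact abs_le.mp hx.1
  exact ne_top_of_le_ne_top (measure_Icc_lt_top).ne (measure_mono hsub)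

-- Egorov packaging
lemma exists_unif_set (a : ℕ → ℝ → ℝ) (w' : ℝ → ℝ)
    (ham : ∀ n, StronglyMeasurable (a n)) (hw' : StronglyMeasurable w')
    (B : Set ℝ) (hBm : MeasurableSet B) (hBfin : volume B ≠ ⊤) (hBpos : 0 < volume B)
    (hconv : ∀ᵐ x : ℝ, x ∈ B → Tendsto (fun n => a n x) atTop (nhds (w' x)))
    (δ : ℝ) (hδ : 0 < δ) :
    ∃ B' : Set ℝ, B' ⊆ B ∧ MeasurableSet B' ∧ 0 < volume B' ∧ volume B' ≠ ⊤ ∧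
      ∃ n₀ : ℕ, ∀ n, n₀ ≤ n → ∀ x ∈ B', |a n x - w' x| < δ := by
  have hε : (0:ℝ) < (volume B).toReal / 2 := by
    have := ENNReal.toReal_pos hBpos.ne' hBfin
    linarith
  obtain ⟨t, hts, htm, htμ, hunif⟩ :=
    tendstoUniformlyOn_of_ae_tendsto ham hw' hBm hBfin hconv hε
  have htμ' : volume t ≤ volume B / 2 := by
    refine le_trans htμ (le_of_eq ?_)
    rw [ENNReal.ofReal_div_of_pos (by norm_num), ENNReal.ofReal_toReal hBfin]
    norm_num
  refine ⟨B \ t, Set.diff_subset, hBm.diff htm, ?_, ?_, ?_⟩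
  · rw [pos_iff_ne_zero]
    intro h0
    have h1 : volume B ≤ volume (B \ t) + volume t :=
      le_trans (measure_mono (Set.subset_diff_union B t)) (measure_union_le _ _)
    rw [h0, zero_add] at h1
    exact absurd (lt_of_le_of_lt (le_trans h1 htμ')
      (ENNReal.half_lt_self hBpos.ne' hBfin)) (lt_irrefl _)
  · exact ne_top_of_le_ne_top hBfin (measure_mono Set.diff_subset)
  · have := (Metric.tendstoUniformlyOn_iff.mp hunif) δ hδ
    rw [eventually_atTop] at this
    obtain ⟨n₀, hn₀⟩ := this
    refine ⟨n₀, fun n hn x hx => ?_⟩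
    have := hn₀ n hn x hx
    rw [Real.dist_eq, abs_sub_comm] at this
    exact this

-- L² lintegral identity
lemma sq_lintegral_eq (f : ℝ → ℝ) :
    ∫⁻ x : ℝ, ENNReal.ofReal ((f x) ^ 2) = eLpNorm f 2 volume ^ (2:ℝ) := by
  rw [eLpNorm_eq_lintegral_rpow_enorm_toReal (by norm_num) (by norm_num)]
  rw [← ENNReal.rpow_mul]
  rw [ENNReal.toReal_ofNat]
  norm_num
  apply lintegral_congr
  intro x
  rw [Real.enorm_eq_ofReal_abs, ← ENNReal.ofReal_pow (abs_nonneg _), sq_abs]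

/-- Cingolani–Weth type lemma. -/
theorem star_norm_control (u v : ℕ → ℝ → ℝ) (w : ℝ → ℝ)
    (hu : ∀ n, MemLp (u n) 2 volume) (hw : MemLp w 2 volume)
    (hw0 : ¬ (w =ᵐ[volume] (fun _ => 0)))
    (hptw : ∀ᵐ x : ℝ, Tendsto (fun n => u n x) atTop (nhds (w x)))
    (hv : ∀ n, MemLp (v n) 2 volume)
    (hvbdd : ∃ M : ℝ, ∀ n, eLpNorm (v n) 2 volume ≤ ENNReal.ofReal M)
    (hA : ∃ S : ℝ, ∀ n,
      Alin (fun x => (u n x) ^ 2) (fun x => (v n x) ^ 2) ≤ ENNReal.ofReal S) :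
    (∃ n₀ : ℕ, ∃ C : ℝ, 0 < C ∧ ∀ n, n₀ ≤ n →
      starLin (v n) ^ (1 / 2 : ℝ) < ENNReal.ofReal C) ∧
    ((Tendsto (fun n => Alin (fun x => (u n x) ^ 2) (fun x => (v n x) ^ 2))
        atTop (nhds 0)) →
      (Tendsto (fun n => eLpNorm (v n) 2 volume) atTop (nhds 0)) →
      Tendsto (fun n => starLin (v n) ^ (1 / 2 : ℝ)) atTop (nhds 0)) := by
  classical
  set a : ℕ → ℝ → ℝ := fun n => ((hu n).1.mk (u n)) with ha_def
  set w' : ℝ → ℝ := hw.1.mk w with hw'_def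
  have ham : ∀ n, StronglyMeasurable (a n) := fun n => (hu n).1.stronglyMeasurable_mk
  have hw'm : StronglyMeasurable w' := hw.1.stronglyMeasurable_mk
  set b : ℕ → ℝ → ℝ := fun n => ((hv n).1.mk (v n)) with hb_def
  have hbm : ∀ n, StronglyMeasurable (b n) := fun n => (hv n).1.stronglyMeasurable_mk
  set V : ℕ → ℝ≥0∞ := fun n => ∫⁻ x : ℝ, ENNReal.ofReal ((v n x) ^ 2) with hV
  have hstar_eq : ∀ n, starLin (v n) = starLin (b n) := by
    intro n
    simp only [starLin]
    apply lintegral_congr_ae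
    filter_upwards [(hv n).1.ae_eq_mk] with x hx
    rw [hx]
  have hV_eq : ∀ n, (∫⁻ y : ℝ, ENNReal.ofReal ((b n y) ^ 2)) = V n := by
    intro n
    apply lintegral_congr_ae
    filter_upwards [(hv n).1.ae_eq_mk] with x hx
    rw [hx]
  have hAlin_eq : ∀ n, Alin (fun x => (u n x) ^ 2) (fun x => (v n x) ^ 2)
      = Alin (fun x => (a n x) ^ 2) (fun x => (b n x) ^ 2) := by
    intro n
    simp only [Alin]
    rw [Measure.volume_eq_prod]
    apply lintegral_congr_ae
    have h1 : (fun p : ℝ × ℝ => u n p.1)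
        =ᵐ[(volume : Measure ℝ).prod (volume : Measure ℝ)] (fun p => a n p.1) :=
      Measure.quasiMeasurePreserving_fst.ae_eq_comp (hu n).1.ae_eq_mk
    have h2 : (fun p : ℝ × ℝ => v n p.2)
        =ᵐ[(volume : Measure ℝ).prod (volume : Measure ℝ)] (fun p => b n p.2) :=
      Measure.quasiMeasurePreserving_snd.ae_eq_comp (hv n).1.ae_eq_mk
    filter_upwards [h1, h2] with p e1 e2
    rw [show u n p.1 = a n p.1 from e1, show v n p.2 = b n p.2 from e2]
  have hae : ∀ᵐ x : ℝ, (∀ n, u n x = a n x) ∧ w x = w' x ∧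
      Tendsto (fun n => u n x) atTop (nhds (w x)) :=
    ((ae_all_iff.2 fun n => (hu n).1.ae_eq_mk).and ((hw.1.ae_eq_mk).and hptw))
  have hw'0 : 0 < volume {x : ℝ | w' x ≠ 0} := by
    rw [pos_iff_ne_zero]
    intro h
    apply hw0
    refine hw.1.ae_eq_mk.trans ?_
    rw [Filter.EventuallyEq, ae_iff]
    convert h using 2
  obtain ⟨B, R, δ₀, hBm, hδ₀, hR, hBpos, hBfin, hBR, hBw⟩ :=
    exists_good_set w' hw'm.measurable hw'0
  have hconv : ∀ᵐ x : ℝ, x ∈ B → Tendsto (fun n => a n x) atTop (nhds (w' x)) := by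
    filter_upwards [hae] with x hx _
    obtain ⟨heq, hweq, htd⟩ := hx
    rw [← hweq]
    exact Filter.Tendsto.congr heq htd
  obtain ⟨B', hB'sub, hB'm, hB'pos, hB'fin, n₀, hn₀⟩ :=
    exists_unif_set a w' ham hw'm B hBm hBfin hBpos hconv (δ₀ / 2) (by linarith)
  have hbounds : ∀ n, n₀ ≤ n → ∀ x ∈ B', δ₀ / 2 ≤ |a n x| ∧ |a n x| ≤ R + δ₀ := by
    intro n hn x hx
    have h1 := hn₀ n hn x hx
    obtain ⟨h2, h3⟩ := hBw x (hB'sub hx)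
    have h4 : |w' x| - |a n x| ≤ |a n x - w' x| := by
      have := abs_sub_abs_le_abs_sub (w' x) (a n x)
      rw [abs_sub_comm] at this
      linarith
    have h5 : |a n x| - |w' x| ≤ |a n x - w' x| := abs_sub_abs_le_abs_sub _ _
    constructor <;> linarith
  set c : ℝ≥0∞ := ENNReal.ofReal ((δ₀ / 2) ^ 2) * volume B' with hc
  set K : ℝ≥0∞ := ENNReal.ofReal (Real.log (1 + R) * (R + δ₀) ^ 2) * volume B' with hK
  have hc0 : c ≠ 0 := by
    apply mul_ne_zero _ hB'pos.ne'
    exact (ENNReal.ofReal_pos.2 (by positivity)).ne'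
  have hcT : c ≠ ⊤ := ENNReal.mul_ne_top ENNReal.ofReal_ne_top hB'fin
  have hKT : K ≠ ⊤ := ENNReal.mul_ne_top ENNReal.ofReal_ne_top hB'fin
  have hmain : ∀ n, n₀ ≤ n →
      starLin (v n) ≤
        (Alin (fun x => (u n x) ^ 2) (fun x => (v n x) ^ 2) + K * V n) / c := by
    intro n hn
    rw [ENNReal.le_div_iff_mul_le (Or.inl hc0) (Or.inl hcT), mul_comm]
    calc c * starLin (v n)
        = ENNReal.ofReal ((δ₀ / 2) ^ 2) * volume B' * starLin (b n) := by
          rw [hstar_eq n]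
      _ ≤ Alin (fun x => (a n x) ^ 2) (fun x => (b n x) ^ 2) +
          ENNReal.ofReal (Real.log (1 + R) * (R + δ₀) ^ 2) * volume B' *
            (∫⁻ y : ℝ, ENNReal.ofReal ((b n y) ^ 2)) :=
          key_estimate (a n) (b n) (ham n).measurable (hbm n).measurable B' hB'm
            R (δ₀ / 2) (R + δ₀) hR (by linarith)
            (fun x hx => hBR x (hB'sub hx)) (hbounds n hn)
      _ = Alin (fun x => (u n x) ^ 2) (fun x => (v n x) ^ 2) + K * V n := by
          rw [hAlin_eq n, hV_eq n]
  obtain ⟨M, hM⟩ := hvbdd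
  obtain ⟨S, hS⟩ := hA
  have hVle : ∀ n, V n ≤ ENNReal.ofReal M ^ (2:ℝ) := by
    intro n
    show (∫⁻ x : ℝ, ENNReal.ofReal ((v n x) ^ 2)) ≤ _
    rw [sq_lintegral_eq]
    exact ENNReal.rpow_le_rpow (hM n) (by norm_num)
  set D : ℝ≥0∞ := (ENNReal.ofReal S + K * ENNReal.ofReal M ^ (2:ℝ)) / c with hD_def
  have hDfin : D ≠ ⊤ := by
    apply (ENNReal.div_lt_top _ hc0).ne
    exact ENNReal.add_ne_top.2 ⟨ENNReal.ofReal_ne_top,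
      ENNReal.mul_ne_top hKT
        (ENNReal.rpow_ne_top_of_nonneg (by norm_num) ENNReal.ofReal_ne_top)⟩
  have hD : ∀ n, n₀ ≤ n → starLin (v n) ≤ D := fun n hn =>
    le_trans (hmain n hn)
      (ENNReal.div_le_div_right
        (add_le_add (hS n) (mul_le_mul_right (hVle n) K)) c)
  constructor
  · refine ⟨n₀, (D ^ (1 / 2 : ℝ)).toReal + 1, ?_, fun n hn => ?_⟩
    · have := ENNReal.toReal_nonneg (a := D ^ (1 / 2 : ℝ))
      linarith
    · have h1 : starLin (v n) ^ (1 / 2 : ℝ) ≤ D ^ (1 / 2 : ℝ) :=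
        ENNReal.rpow_le_rpow (hD n hn) (by norm_num)
      have h2 : D ^ (1 / 2 : ℝ) ≠ ⊤ :=
        ENNReal.rpow_ne_top_of_nonneg (by norm_num) hDfin
      have h3 : (0:ℝ) ≤ (D ^ (1 / 2 : ℝ)).toReal := ENNReal.toReal_nonneg
      calc starLin (v n) ^ (1 / 2 : ℝ) ≤ D ^ (1 / 2 : ℝ) := h1
        _ = ENNReal.ofReal ((D ^ (1 / 2 : ℝ)).toReal) := (ENNReal.ofReal_toReal h2).symm
        _ < ENNReal.ofReal ((D ^ (1 / 2 : ℝ)).toReal + 1) :=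
          (ENNReal.ofReal_lt_ofReal_iff (by linarith)).2 (by linarith)
  · intro hA0 hv0
    have hV0 : Tendsto V atTop (nhds 0) := by
      have h1 : Tendsto (fun n => eLpNorm (v n) 2 volume ^ (2:ℝ)) atTop
          (nhds ((0:ℝ≥0∞) ^ (2:ℝ))) :=
        (ENNReal.continuous_rpow_const.tendsto 0).comp hv0
      rw [ENNReal.zero_rpow_of_pos (by norm_num)] at h1
      exact Filter.Tendsto.congr (fun n => (sq_lintegral_eq (v n)).symm) h1
    have hRHS : Tendsto (fun n =>
        (Alin (fun x => (u n x) ^ 2) (fun x => (v n x) ^ 2) + K * V n) / c)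
        atTop (nhds 0) := by
      have h1 := hA0.add (ENNReal.Tendsto.const_mul hV0 (Or.inr hKT))
      rw [mul_zero, add_zero] at h1
      have h2 := ENNReal.Tendsto.div_const h1 (Or.inr hc0)
      rwa [ENNReal.zero_div] at h2
    have hstar0 : Tendsto (fun n => starLin (v n)) atTop (nhds 0) :=
      tendsto_of_tendsto_of_tendsto_of_le_of_le' tendsto_const_nhds hRHS
        (Filter.Eventually.of_forall fun n => zero_le)
        (eventually_atTop.2 ⟨n₀, hmain⟩)
    have h4 : Tendsto (fun n => starLin (v n) ^ (1 / 2 : ℝ)) atTop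
        (nhds ((0 : ℝ≥0∞) ^ (1 / 2 : ℝ))) :=
      ((ENNReal.continuous_rpow_const (y := (1 / 2 : ℝ))).tendsto 0).comp hstar0
    rwa [ENNReal.zero_rpow_of_pos (by norm_num)] at h4
end
end

section
/- For all measurable functions u, v, w, z : ℝ → ℝ in L²(ℝ), the following inequality holds (as an inequality in [0,∞]): ∬_{ℝ×ℝ} ln(1+|x−y|) |u(x)v(x)| |w(y)z(y)| dx dy ≤ ‖u‖_* ‖v‖_* ‖w‖_{L²} ‖z‖_{L²} + ‖u‖_{L²} ‖v‖_{L²} ‖w‖_* ‖z‖_*, where ‖u‖_*² = ∫_ℝ ln(1+|x|) u(x)² dx. -/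
open MeasureTheory Real Filter

noncomputable section

private lemma cs2 {f g : ℝ → ENNReal} (hf : AEMeasurable f) (hg : AEMeasurable g) :
    ∫⁻ x, f x * g x ≤ (∫⁻ x, f x ^ (2:ℝ)) ^ (1/2:ℝ) * (∫⁻ x, g x ^ (2:ℝ)) ^ (1/2:ℝ) := by
  have h := ENNReal.lintegral_mul_le_Lp_mul_Lq volume (p := 2) (q := 2)
    Real.HolderConjugate.two_two hf hg
  simpa using h

private lemma ofReal_abs_mul (r s : ℝ) :
    ENNReal.ofReal |r * s| = (‖r‖₊ : ENNReal) * (‖s‖₊ : ENNReal) := by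
  rw [abs_mul, ENNReal.ofReal_mul (abs_nonneg r), ← Real.enorm_eq_ofReal_abs,
    ← Real.enorm_eq_ofReal_abs]
  rfl

private lemma star_factor (u v : ℝ → ℝ) (hu : AEMeasurable u) (hv : AEMeasurable v) :
    ∫⁻ x, ENNReal.ofReal (Real.log (1 + |x|)) * ((‖u x‖₊ : ENNReal) * (‖v x‖₊ : ENNReal))
      ≤ starLin u ^ (1/2:ℝ) * starLin v ^ (1/2:ℝ) := by
  have ha : Measurable fun x : ℝ => ENNReal.ofReal (Real.log (1 + |x|)) :=
    (Real.measurable_log.comp (measurable_const.add measurable_abs)).ennreal_ofReal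
  have hstar : ∀ (f : ℝ → ℝ), starLin f
      = ∫⁻ x, (ENNReal.ofReal (Real.log (1 + |x|)) ^ (1/2:ℝ) * (‖f x‖₊ : ENNReal)) ^ (2:ℝ) := by
    intro f
    unfold starLin
    congr 1
    ext x
    have h0 : 0 ≤ Real.log (1 + |x|) := Real.log_nonneg (by simp [abs_nonneg])
    rw [ENNReal.mul_rpow_of_nonneg _ _ (by norm_num : (0:ℝ) ≤ 2), ← ENNReal.rpow_mul,
      show (1/2:ℝ) * 2 = 1 by norm_num, ENNReal.rpow_one, ENNReal.ofReal_mul h0]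
    congr 1
    rw [← enorm_eq_nnnorm, Real.enorm_eq_ofReal_abs,
      ENNReal.ofReal_rpow_of_nonneg (abs_nonneg _) (by norm_num : (0:ℝ) ≤ 2)]
    congr 1
    rw [show ((2:ℝ)) = ((2:ℕ):ℝ) by norm_num, Real.rpow_natCast, sq_abs]
  have key : ∀ x, ENNReal.ofReal (Real.log (1 + |x|)) * ((‖u x‖₊ : ENNReal) * (‖v x‖₊ : ENNReal))
      = (ENNReal.ofReal (Real.log (1 + |x|)) ^ (1/2:ℝ) * (‖u x‖₊ : ENNReal))
        * (ENNReal.ofReal (Real.log (1 + |x|)) ^ (1/2:ℝ) * (‖v x‖₊ : ENNReal)) := by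
    intro x
    have : ENNReal.ofReal (Real.log (1 + |x|)) ^ (1/2:ℝ)
        * ENNReal.ofReal (Real.log (1 + |x|)) ^ (1/2:ℝ)
        = ENNReal.ofReal (Real.log (1 + |x|)) := by
      rw [← ENNReal.rpow_add_of_nonneg _ _ (by norm_num) (by norm_num)]
      norm_num
    calc ENNReal.ofReal (Real.log (1 + |x|)) * ((‖u x‖₊ : ENNReal) * (‖v x‖₊ : ENNReal))
        = (ENNReal.ofReal (Real.log (1 + |x|)) ^ (1/2:ℝ)
            * ENNReal.ofReal (Real.log (1 + |x|)) ^ (1/2:ℝ))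
          * ((‖u x‖₊ : ENNReal) * (‖v x‖₊ : ENNReal)) := by rw [this]
      _ = _ := mul_mul_mul_comm _ _ _ _
  simp only [key]
  calc ∫⁻ x, (ENNReal.ofReal (Real.log (1 + |x|)) ^ (1/2:ℝ) * (‖u x‖₊ : ENNReal))
        * (ENNReal.ofReal (Real.log (1 + |x|)) ^ (1/2:ℝ) * (‖v x‖₊ : ENNReal))
      ≤ (∫⁻ x, (ENNReal.ofReal (Real.log (1 + |x|)) ^ (1/2:ℝ) * (‖u x‖₊ : ENNReal)) ^ (2:ℝ)) ^ (1/2:ℝ)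
        * (∫⁻ x, (ENNReal.ofReal (Real.log (1 + |x|)) ^ (1/2:ℝ) * (‖v x‖₊ : ENNReal)) ^ (2:ℝ)) ^ (1/2:ℝ) :=
        cs2 ((ha.aemeasurable.pow_const _).mul hu.enorm)
          ((ha.aemeasurable.pow_const _).mul hv.enorm)
    _ = starLin u ^ (1/2:ℝ) * starLin v ^ (1/2:ℝ) := by rw [hstar u, hstar v]

private lemma l2_factor (w z : ℝ → ℝ) (hw : AEMeasurable w) (hz : AEMeasurable z) :
    ∫⁻ y, (‖w y‖₊ : ENNReal) * (‖z y‖₊ : ENNReal)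
      ≤ eLpNorm w 2 volume * eLpNorm z 2 volume := by
  have hW : eLpNorm w 2 volume = (∫⁻ x, (‖w x‖₊ : ENNReal) ^ (2:ℝ)) ^ (1/2:ℝ) := by
    rw [eLpNorm_eq_lintegral_rpow_enorm_toReal (by norm_num) (by norm_num)]
    norm_num
    rfl
  have hZ : eLpNorm z 2 volume = (∫⁻ x, (‖z x‖₊ : ENNReal) ^ (2:ℝ)) ^ (1/2:ℝ) := by
    rw [eLpNorm_eq_lintegral_rpow_enorm_toReal (by norm_num) (by norm_num)]
    norm_num
    rfl
  rw [hW, hZ]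
  exact cs2 hw.enorm hz.enorm

/-- the estimate
`A(uv, wz) ≤ ‖u‖_*‖v‖_*‖w‖₂‖z‖₂ + ‖u‖₂‖v‖₂‖w‖_*‖z‖_*`, as an inequality in `[0,∞]`. -/
theorem A_product_estimate (u v w z : ℝ → ℝ)
    (hu : MemLp u 2 volume) (hv : MemLp v 2 volume)
    (hw : MemLp w 2 volume) (hz : MemLp z 2 volume) :
    (∫⁻ p : ℝ × ℝ, ENNReal.ofReal
        (Real.log (1 + |p.1 - p.2|) * |u p.1 * v p.1| * |w p.2 * z p.2|))
      ≤ starLin u ^ (1 / 2 : ℝ) * starLin v ^ (1 / 2 : ℝ)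
          * eLpNorm w 2 volume * eLpNorm z 2 volume
        + eLpNorm u 2 volume * eLpNorm v 2 volume
          * starLin w ^ (1 / 2 : ℝ) * starLin z ^ (1 / 2 : ℝ) := by
  have hu' : AEMeasurable u := hu.aestronglyMeasurable.aemeasurable
  have hv' : AEMeasurable v := hv.aestronglyMeasurable.aemeasurable
  have hw' : AEMeasurable w := hw.aestronglyMeasurable.aemeasurable
  have hz' : AEMeasurable z := hz.aestronglyMeasurable.aemeasurable
  have ha : Measurable fun x : ℝ => ENNReal.ofReal (Real.log (1 + |x|)) :=
    (Real.measurable_log.comp (measurable_const.add measurable_abs)).ennreal_ofReal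
  set a : ℝ → ENNReal := fun x => ENNReal.ofReal (Real.log (1 + |x|)) with ha_def
  have hlog0 : ∀ x : ℝ, 0 ≤ Real.log (1 + |x|) := fun x =>
    Real.log_nonneg (by simp [abs_nonneg])
  -- pointwise bound
  have key : ∀ p : ℝ × ℝ,
      ENNReal.ofReal (Real.log (1 + |p.1 - p.2|) * |u p.1 * v p.1| * |w p.2 * z p.2|)
      ≤ (a p.1 * ((‖u p.1‖₊ : ENNReal) * (‖v p.1‖₊ : ENNReal)))
          * ((‖w p.2‖₊ : ENNReal) * (‖z p.2‖₊ : ENNReal))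
        + ((‖u p.1‖₊ : ENNReal) * (‖v p.1‖₊ : ENNReal))
          * (a p.2 * ((‖w p.2‖₊ : ENNReal) * (‖z p.2‖₊ : ENNReal))) := by
    rintro ⟨x, y⟩
    have hsub : Real.log (1 + |x - y|) ≤ Real.log (1 + |x|) + Real.log (1 + |y|) := by
      rw [← Real.log_mul (by positivity) (by positivity)]
      apply Real.log_le_log (by positivity)
      have h1 : |x - y| ≤ |x| + |y| := abs_sub x y
      nlinarith [mul_nonneg (abs_nonneg x) (abs_nonneg y)]
    calc ENNReal.ofReal (Real.log (1 + |x - y|) * |u x * v x| * |w y * z y|)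
        ≤ ENNReal.ofReal ((Real.log (1 + |x|) + Real.log (1 + |y|)) * |u x * v x| * |w y * z y|) := by
          apply ENNReal.ofReal_le_ofReal
          have := abs_nonneg (u x * v x)
          have := abs_nonneg (w y * z y)
          apply mul_le_mul_of_nonneg_right _ (abs_nonneg _)
          exact mul_le_mul_of_nonneg_right hsub (abs_nonneg _)
      _ = _ := by
          have expand : ∀ L : ℝ, 0 ≤ L → ∀ r s t q : ℝ,
              ENNReal.ofReal (L * |r * s| * |t * q|)
                = ENNReal.ofReal L * ((‖r‖₊ : ENNReal) * (‖s‖₊ : ENNReal))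
                  * ((‖t‖₊ : ENNReal) * (‖q‖₊ : ENNReal)) := by
            intro L hL r s t q
            rw [ENNReal.ofReal_mul (mul_nonneg hL (abs_nonneg _)),
              ENNReal.ofReal_mul hL, ofReal_abs_mul, ofReal_abs_mul]
          have e1 : (Real.log (1 + |x|) + Real.log (1 + |y|)) * |u x * v x| * |w y * z y|
              = Real.log (1 + |x|) * |u x * v x| * |w y * z y|
                + Real.log (1 + |y|) * |u x * v x| * |w y * z y| := by ring
          rw [e1, ENNReal.ofReal_add
              (mul_nonneg (mul_nonneg (hlog0 x) (abs_nonneg _)) (abs_nonneg _))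
              (mul_nonneg (mul_nonneg (hlog0 y) (abs_nonneg _)) (abs_nonneg _)),
            expand _ (hlog0 x), expand _ (hlog0 y)]
          ring
  -- split
  have hmeas1 : AEMeasurable (fun p : ℝ × ℝ =>
      (a p.1 * ((‖u p.1‖₊ : ENNReal) * (‖v p.1‖₊ : ENNReal)))
        * ((‖w p.2‖₊ : ENNReal) * (‖z p.2‖₊ : ENNReal))) (volume : Measure (ℝ × ℝ)) := by
    rw [Measure.volume_eq_prod ℝ ℝ]
    exact ((ha.aemeasurable.mul (hu'.enorm.mul hv'.enorm)).comp_fst).mul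
      ((hw'.enorm.mul hz'.enorm).comp_snd)
  have step1 : (∫⁻ p : ℝ × ℝ, ENNReal.ofReal
        (Real.log (1 + |p.1 - p.2|) * |u p.1 * v p.1| * |w p.2 * z p.2|))
      ≤ (∫⁻ p : ℝ × ℝ, (a p.1 * ((‖u p.1‖₊ : ENNReal) * (‖v p.1‖₊ : ENNReal)))
          * ((‖w p.2‖₊ : ENNReal) * (‖z p.2‖₊ : ENNReal)))
        + ∫⁻ p : ℝ × ℝ, ((‖u p.1‖₊ : ENNReal) * (‖v p.1‖₊ : ENNReal))
          * (a p.2 * ((‖w p.2‖₊ : ENNReal) * (‖z p.2‖₊ : ENNReal))) := by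
    refine le_trans (lintegral_mono key) ?_
    exact (lintegral_add_left' hmeas1 _).le
  refine le_trans step1 ?_
  have t1 : (∫⁻ p : ℝ × ℝ, (a p.1 * ((‖u p.1‖₊ : ENNReal) * (‖v p.1‖₊ : ENNReal)))
          * ((‖w p.2‖₊ : ENNReal) * (‖z p.2‖₊ : ENNReal)))
      = (∫⁻ x, a x * ((‖u x‖₊ : ENNReal) * (‖v x‖₊ : ENNReal)))
        * ∫⁻ y, (‖w y‖₊ : ENNReal) * (‖z y‖₊ : ENNReal) := by
    rw [Measure.volume_eq_prod ℝ ℝ]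
    exact lintegral_prod_mul (ha.aemeasurable.mul (hu'.enorm.mul hv'.enorm))
      (hw'.enorm.mul hz'.enorm)
  have t2 : (∫⁻ p : ℝ × ℝ, ((‖u p.1‖₊ : ENNReal) * (‖v p.1‖₊ : ENNReal))
          * (a p.2 * ((‖w p.2‖₊ : ENNReal) * (‖z p.2‖₊ : ENNReal))))
      = (∫⁻ x, (‖u x‖₊ : ENNReal) * (‖v x‖₊ : ENNReal))
        * ∫⁻ y, a y * ((‖w y‖₊ : ENNReal) * (‖z y‖₊ : ENNReal)) := by
    rw [Measure.volume_eq_prod ℝ ℝ]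
    exact lintegral_prod_mul (hu'.enorm.mul hv'.enorm)
      (ha.aemeasurable.mul (hw'.enorm.mul hz'.enorm))
  rw [t1, t2]
  have b1 := star_factor u v hu' hv'
  have b2 := l2_factor w z hw' hz'
  have b3 := l2_factor u v hu' hv'
  have b4 := star_factor w z hw' hz'
  calc (∫⁻ x, a x * ((‖u x‖₊ : ENNReal) * (‖v x‖₊ : ENNReal)))
        * (∫⁻ y, (‖w y‖₊ : ENNReal) * (‖z y‖₊ : ENNReal))
      + (∫⁻ x, (‖u x‖₊ : ENNReal) * (‖v x‖₊ : ENNReal))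
        * (∫⁻ y, a y * ((‖w y‖₊ : ENNReal) * (‖z y‖₊ : ENNReal)))
      ≤ (starLin u ^ (1/2:ℝ) * starLin v ^ (1/2:ℝ)) * (eLpNorm w 2 volume * eLpNorm z 2 volume)
        + (eLpNorm u 2 volume * eLpNorm v 2 volume) * (starLin w ^ (1/2:ℝ) * starLin z ^ (1/2:ℝ)) := by
        gcongr
    _ = _ := by ring
end
end

section
/- (Weak comparison principle) Let 0 < γ < 1 and μ > 0, and let u, v ∈ X with u, v > 0 almost everywhere. Suppose that for every φ ∈ X with φ ≥ 0 a.e.: ∬_{ℝ×ℝ} (v(x)−v(y))(φ(x)−φ(y))/|x−y|² dx dy − μ ∫_ℝ v^{−γ} φ dx ≥ ∬_{ℝ×ℝ} (u(x)−u(y))(φ(x)−φ(y))/|x−y|² dx dy − μ ∫_ℝ u^{−γ} φ dx. Then v ≥ u almost everywhere in ℝ. -/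
open MeasureTheory Real Filter

noncomputable section

private lemma wc_div_le_div {a b c : ℝ} (h : a ≤ b) (hc : 0 ≤ c) : a / c ≤ b / c := by
  rcases hc.eq_or_lt with h0 | h0
  · simp [← h0]
  · exact (div_le_div_iff_of_pos_right h0).mpr h

private lemma wc_abs_sub_le (a b : ℝ) : |a - b| ≤ |a| + |b| := by
  rw [sub_eq_add_neg]
  exact (abs_add_le _ _).trans (by rw [abs_neg])

private lemma wc_max_lip (A B : ℝ) : |max A 0 - max B 0| ≤ |A - B| := by
  have := abs_max_sub_max_le_max A 0 B 0
  simpa using this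

private lemma wc_min_lip (a b c d : ℝ) : |min a b - min c d| ≤ |a - c| + |b - d| := by
  refine (abs_min_sub_min_le_max a b c d).trans (max_le ?_ ?_)
  · exact le_add_of_nonneg_right (abs_nonneg _)
  · exact le_add_of_nonneg_left (abs_nonneg _)

private lemma wc_fst {u : ℝ → ℝ} (hu : AEMeasurable u (volume : Measure ℝ)) :
    AEMeasurable (fun p : ℝ × ℝ => u p.1) (volume : Measure (ℝ × ℝ)) := by
  rw [show (volume : Measure (ℝ × ℝ)) = (volume : Measure ℝ).prod volume from rfl]
  exact hu.comp_quasiMeasurePreserving Measure.quasiMeasurePreserving_fst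

private lemma wc_snd {u : ℝ → ℝ} (hu : AEMeasurable u (volume : Measure ℝ)) :
    AEMeasurable (fun p : ℝ × ℝ => u p.2) (volume : Measure (ℝ × ℝ)) := by
  rw [show (volume : Measure (ℝ × ℝ)) = (volume : Measure ℝ).prod volume from rfl]
  exact hu.comp_quasiMeasurePreserving Measure.quasiMeasurePreserving_snd

private lemma wc_denom_meas : Measurable (fun p : ℝ × ℝ => |p.1 - p.2| ^ 2) :=
  ((continuous_fst.sub continuous_snd).abs.pow 2).measurable

private lemma wc_kerMeas {u φ : ℝ → ℝ} (hu : AEMeasurable u (volume : Measure ℝ))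
    (hφ : AEMeasurable φ (volume : Measure ℝ)) :
    AEStronglyMeasurable
      (fun p : ℝ × ℝ => (u p.1 - u p.2) * (φ p.1 - φ p.2) / |p.1 - p.2| ^ 2)
      (volume : Measure (ℝ × ℝ)) :=
  ((((wc_fst hu).sub (wc_snd hu)).mul ((wc_fst hφ).sub (wc_snd hφ))).div
    wc_denom_meas.aemeasurable).aestronglyMeasurable

private lemma wc_kerMeasSq {φ : ℝ → ℝ} (hφ : AEMeasurable φ (volume : Measure ℝ)) :
    AEStronglyMeasurable
      (fun p : ℝ × ℝ => (φ p.1 - φ p.2) ^ 2 / |p.1 - p.2| ^ 2)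
      (volume : Measure (ℝ × ℝ)) :=
  ((((wc_fst hφ).sub (wc_snd hφ)).pow_const 2).div
    wc_denom_meas.aemeasurable).aestronglyMeasurable

private lemma wc_kerInt_sq {u v φ : ℝ → ℝ} (c₁ c₂ : ℝ)
    (hu : AEMeasurable u (volume : Measure ℝ)) (hv : AEMeasurable v (volume : Measure ℝ))
    (hφ : AEMeasurable φ (volume : Measure ℝ))
    (hKu : Integrable (fun p : ℝ × ℝ => (u p.1 - u p.2) ^ 2 / |p.1 - p.2| ^ 2))
    (hKv : Integrable (fun p : ℝ × ℝ => (v p.1 - v p.2) ^ 2 / |p.1 - p.2| ^ 2))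
    (hb : ∀ x y : ℝ, |φ x - φ y| ≤ c₁ * |u x - u y| + c₂ * |v x - v y|) :
    Integrable (fun p : ℝ × ℝ => (φ p.1 - φ p.2) ^ 2 / |p.1 - p.2| ^ 2) := by
  refine Integrable.mono' ((hKu.const_mul (2 * c₁ ^ 2)).add (hKv.const_mul (2 * c₂ ^ 2)))
    (wc_kerMeasSq hφ) (Filter.Eventually.of_forall fun p => ?_)
  have h1 : (φ p.1 - φ p.2) ^ 2 ≤
      2 * c₁ ^ 2 * (u p.1 - u p.2) ^ 2 + 2 * c₂ ^ 2 * (v p.1 - v p.2) ^ 2 := by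
    have hb' := hb p.1 p.2
    nlinarith [abs_nonneg (φ p.1 - φ p.2), sq_abs (φ p.1 - φ p.2),
      sq_abs (u p.1 - u p.2), sq_abs (v p.1 - v p.2),
      abs_nonneg (u p.1 - u p.2), abs_nonneg (v p.1 - v p.2),
      sq_nonneg (c₁ * |u p.1 - u p.2| - c₂ * |v p.1 - v p.2|),
      sq_nonneg (c₁ * |u p.1 - u p.2| + c₂ * |v p.1 - v p.2|)]
  have h2 : (0:ℝ) ≤ |p.1 - p.2| ^ 2 := sq_nonneg _
  rw [Real.norm_eq_abs, abs_of_nonneg (by positivity)]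
  calc (φ p.1 - φ p.2) ^ 2 / |p.1 - p.2| ^ 2
      ≤ (2 * c₁ ^ 2 * (u p.1 - u p.2) ^ 2 + 2 * c₂ ^ 2 * (v p.1 - v p.2) ^ 2) / |p.1 - p.2| ^ 2 :=
        wc_div_le_div h1 h2
    _ = 2 * c₁ ^ 2 * ((u p.1 - u p.2) ^ 2 / |p.1 - p.2| ^ 2)
        + 2 * c₂ ^ 2 * ((v p.1 - v p.2) ^ 2 / |p.1 - p.2| ^ 2) := by
        rw [add_div, mul_div_assoc, mul_div_assoc]

private lemma wc_kerInt_mul {ψ φ : ℝ → ℝ}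
    (hψ : AEMeasurable ψ (volume : Measure ℝ)) (hφ : AEMeasurable φ (volume : Measure ℝ))
    (hKψ : Integrable (fun p : ℝ × ℝ => (ψ p.1 - ψ p.2) ^ 2 / |p.1 - p.2| ^ 2))
    (hKφ : Integrable (fun p : ℝ × ℝ => (φ p.1 - φ p.2) ^ 2 / |p.1 - p.2| ^ 2)) :
    Integrable (fun p : ℝ × ℝ => (ψ p.1 - ψ p.2) * (φ p.1 - φ p.2) / |p.1 - p.2| ^ 2) := by
  refine Integrable.mono' (hKψ.add hKφ) (wc_kerMeas hψ hφ) (Filter.Eventually.of_forall fun p => ?_)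
  have h1 : |(ψ p.1 - ψ p.2) * (φ p.1 - φ p.2)| ≤ (ψ p.1 - ψ p.2) ^ 2 + (φ p.1 - φ p.2) ^ 2 := by
    rw [abs_mul]
    nlinarith [sq_abs (ψ p.1 - ψ p.2), sq_abs (φ p.1 - φ p.2),
      sq_nonneg (|ψ p.1 - ψ p.2| - |φ p.1 - φ p.2|)]
  have h2 : (0:ℝ) ≤ |p.1 - p.2| ^ 2 := sq_nonneg _
  rw [Real.norm_eq_abs, abs_div, abs_of_nonneg h2]
  calc |(ψ p.1 - ψ p.2) * (φ p.1 - φ p.2)| / |p.1 - p.2| ^ 2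
      ≤ ((ψ p.1 - ψ p.2) ^ 2 + (φ p.1 - φ p.2) ^ 2) / |p.1 - p.2| ^ 2 := wc_div_le_div h1 h2
    _ = (ψ p.1 - ψ p.2) ^ 2 / |p.1 - p.2| ^ 2 + (φ p.1 - φ p.2) ^ 2 / |p.1 - p.2| ^ 2 := add_div _ _ _

set_option maxHeartbeats 1000000 in
/-- weak comparison principle for `(−Δ)^{1/2} − μ(·)^{−γ}`. -/
theorem weak_comparison (γ μ : ℝ) (hγ0 : 0 < γ) (hγ1 : γ < 1) (hμ : 0 < μ)
    (u v : ℝ → ℝ) (hu : memX u) (hv : memX v)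
    (hupos : ∀ᵐ x : ℝ, 0 < u x) (hvpos : ∀ᵐ x : ℝ, 0 < v x)
    (hcomp : ∀ φ : ℝ → ℝ, memX φ → (∀ᵐ x : ℝ, 0 ≤ φ x) →
      bilinGagliardo u φ - μ * ∫ x : ℝ, (u x) ^ (-γ) * φ x
        ≤ bilinGagliardo v φ - μ * ∫ x : ℝ, (v x) ^ (-γ) * φ x) :
    ∀ᵐ x : ℝ, u x ≤ v x := by
  by_contra hcon
  -- a.e. measurability of u and v
  have hmeas : ∀ f : ℝ → ℝ, Integrable (fun x : ℝ => (f x) ^ 2) → (∀ᵐ x : ℝ, 0 < f x) →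
      AEMeasurable f (volume : Measure ℝ) := by
    intro f hint hpos
    have h2 : AEMeasurable (fun x => (f x) ^ 2) := hint.aestronglyMeasurable.aemeasurable
    have heq : (fun x => Real.sqrt ((f x) ^ 2)) =ᵐ[volume] f :=
      hpos.mono fun x hx => Real.sqrt_sq hx.le
    exact (Real.continuous_sqrt.measurable.comp_aemeasurable h2).congr heq
  have hum : AEMeasurable u (volume : Measure ℝ) := hmeas u hu.1.1 hupos
  have hvm : AEMeasurable v (volume : Measure ℝ) := hmeas v hv.1.1 hvpos
  -- choice of δ
  have hδex : ∃ δ : ℝ, 0 < δ ∧ volume {x : ℝ | v x + δ < u x} ≠ 0 := by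
    by_contra hδ
    push_neg at hδ
    apply hcon
    have hnull : ∀ n : ℕ, volume {x : ℝ | v x + 1 / (n + 1) < u x} = 0 :=
      fun n => hδ _ (by positivity)
    have hUnull : volume (⋃ n : ℕ, {x : ℝ | v x + 1 / (n + 1) < u x}) = 0 :=
      measure_iUnion_null hnull
    have hsub : {x : ℝ | v x < u x} ⊆ ⋃ n : ℕ, {x : ℝ | v x + 1 / (n + 1) < u x} := by
      intro x hx
      have hpos : 0 < u x - v x := sub_pos.2 hx
      obtain ⟨n, hn⟩ := exists_nat_gt (1 / (u x - v x))
      refine Set.mem_iUnion.2 ⟨n, ?_⟩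
      have h1 : 1 / ((n : ℝ) + 1) < u x - v x := by
        have h2 : 1 / (u x - v x) < (n : ℝ) + 1 := hn.trans (lt_add_one _)
        have := one_div_lt_one_div_of_lt (by positivity) h2
        rwa [one_div_one_div] at this
      show v x + 1 / ((n:ℝ) + 1) < u x
      linarith
    rw [ae_iff]
    have : volume {x : ℝ | v x < u x} = 0 := measure_mono_null hsub hUnull
    simpa [not_le] using this
  obtain ⟨δ, hδpos, hS⟩ := hδex
  -- test functions
  set w : ℝ → ℝ := fun x => u x - v x with hwdef
  set φδ : ℝ → ℝ := fun x => max (w x - δ) 0 with hφdef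
  set ψ : ℕ → ℝ → ℝ := fun n x => min (φδ x) (((n : ℝ) + 1) * v x) with hψdef
  set r : ℕ → ℝ → ℝ := fun n x => φδ x - ψ n x with hrdef
  have hwm : AEMeasurable w (volume : Measure ℝ) := hum.sub hvm
  have hφm : AEMeasurable φδ (volume : Measure ℝ) :=
    (hwm.sub aemeasurable_const).max aemeasurable_const
  have hψm : ∀ n : ℕ, AEMeasurable (ψ n) (volume : Measure ℝ) :=
    fun n => hφm.min (hvm.const_mul _)
  have hrm : ∀ n : ℕ, AEMeasurable (r n) (volume : Measure ℝ) := fun n => hφm.sub (hψm n)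
  -- pointwise structure
  have hφ_nonneg : ∀ x, 0 ≤ φδ x := fun x => le_max_right _ _
  have hψ_le : ∀ n x, ψ n x ≤ φδ x := fun n x => min_le_left _ _
  have hr_nonneg : ∀ n x, 0 ≤ r n x := fun n x => sub_nonneg.2 (hψ_le n x)
  have hφ_le_absw : ∀ x, φδ x ≤ |w x| := by
    intro x
    refine max_le ?_ (abs_nonneg _)
    have := le_abs_self (w x)
    linarith
  have hφ_le_div : ∀ x, φδ x ≤ (w x) ^ 2 / δ := by
    intro x
    rcases le_or_gt (w x) δ with h | h
    · have h0 : φδ x = 0 := max_eq_right (by linarith)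
      rw [h0]
      positivity
    · have h0 : φδ x = w x - δ := max_eq_left (by linarith)
      rw [h0, le_div_iff₀ hδpos]
      nlinarith [sq_nonneg (w x - δ)]
  -- Lipschitz-type bounds
  have hφ_lip : ∀ x y, |φδ x - φδ y| ≤ 1 * |u x - u y| + 1 * |v x - v y| := by
    intro x y
    have h1 : |φδ x - φδ y| ≤ |w x - w y| := by
      have := wc_max_lip (w x - δ) (w y - δ)
      simpa using this
    have h2 : |w x - w y| ≤ |u x - u y| + |v x - v y| := by
      have heq : w x - w y = (u x - u y) - (v x - v y) := by simp only [hwdef]; ring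
      rw [heq]
      exact wc_abs_sub_le _ _
    linarith
  have hψ_lip : ∀ n : ℕ, ∀ x y,
      |ψ n x - ψ n y| ≤ 1 * |u x - u y| + ((n : ℝ) + 2) * |v x - v y| := by
    intro n x y
    have h1 : |ψ n x - ψ n y| ≤ |φδ x - φδ y| + |((n : ℝ) + 1) * v x - ((n : ℝ) + 1) * v y| :=
      wc_min_lip _ _ _ _
    have h2 : |((n : ℝ) + 1) * v x - ((n : ℝ) + 1) * v y| = ((n : ℝ) + 1) * |v x - v y| := by
      rw [← mul_sub, abs_mul, abs_of_nonneg (by positivity : (0:ℝ) ≤ (n : ℝ) + 1)]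
    have h3 := hφ_lip x y
    rw [h2] at h1
    linarith
  have hr_lip : ∀ n : ℕ, ∀ x y,
      |r n x - r n y| ≤ 2 * |u x - u y| + ((n : ℝ) + 3) * |v x - v y| := by
    intro n x y
    have h1 : r n x - r n y = (φδ x - φδ y) - (ψ n x - ψ n y) := by simp only [hrdef]; ring
    have h2 : |r n x - r n y| ≤ |φδ x - φδ y| + |ψ n x - ψ n y| := by
      rw [h1]; exact wc_abs_sub_le _ _
    have h3 := hφ_lip x y
    have h4 := hψ_lip n x y
    linarith
  -- kernel integrability
  have hKu := hu.1.2
  have hKv := hv.1.2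
  have hKφ : Integrable (fun p : ℝ × ℝ => (φδ p.1 - φδ p.2) ^ 2 / |p.1 - p.2| ^ 2) :=
    wc_kerInt_sq 1 1 hum hvm hφm hKu hKv hφ_lip
  have hKψ : ∀ n : ℕ, Integrable (fun p : ℝ × ℝ => (ψ n p.1 - ψ n p.2) ^ 2 / |p.1 - p.2| ^ 2) :=
    fun n => wc_kerInt_sq 1 ((n : ℝ) + 2) hum hvm (hψm n) hKu hKv (hψ_lip n)
  have hKr : ∀ n : ℕ, Integrable (fun p : ℝ × ℝ => (r n p.1 - r n p.2) ^ 2 / |p.1 - p.2| ^ 2) :=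
    fun n => wc_kerInt_sq 2 ((n : ℝ) + 3) hum hvm (hrm n) hKu hKv (hr_lip n)
  -- L² and L¹ facts
  have hw2b : ∀ x, (w x) ^ 2 ≤ 2 * (u x) ^ 2 + 2 * (v x) ^ 2 := by
    intro x
    simp only [hwdef]
    nlinarith [sq_nonneg (u x + v x)]
  have hw2 : Integrable (fun x => (w x) ^ 2) := by
    refine Integrable.mono' ((hu.1.1.const_mul 2).add (hv.1.1.const_mul 2))
      ((hwm.pow_const 2).aestronglyMeasurable) (Filter.Eventually.of_forall fun x => ?_)
    rw [Real.norm_eq_abs, abs_of_nonneg (sq_nonneg _)]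
    exact hw2b x
  have hφδ_int : Integrable φδ := by
    refine Integrable.mono' (hw2.div_const δ) hφm.aestronglyMeasurable
      (Filter.Eventually.of_forall fun x => ?_)
    rw [Real.norm_eq_abs, abs_of_nonneg (hφ_nonneg x)]
    exact hφ_le_div x
  have hG : ∀ᵐ x : ℝ, 0 < u x ∧ 0 < v x := hupos.and hvpos
  -- measurability of rpow
  have hrpm : ∀ f : ℝ → ℝ, AEMeasurable f (volume : Measure ℝ) → (∀ᵐ x : ℝ, 0 < f x) →
      AEMeasurable (fun x => f x ^ (-γ)) (volume : Measure ℝ) := by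
    intro f hf hfpos
    have heq : (fun x => Real.exp (Real.log (f x) * (-γ))) =ᵐ[volume] fun x => f x ^ (-γ) :=
      hfpos.mono fun x hx => (Real.rpow_def_of_pos hx _).symm
    exact (Real.measurable_exp.comp_aemeasurable
      ((Real.measurable_log.comp_aemeasurable hf).mul_const _)).congr heq
  have huγm : AEMeasurable (fun x => u x ^ (-γ)) (volume : Measure ℝ) := hrpm u hum hupos
  have hvγm : AEMeasurable (fun x => v x ^ (-γ)) (volume : Measure ℝ) := hrpm v hvm hvpos
  -- key upper bound for u^(-γ) on the support of φδ
  have hu_bound : ∀ᵐ x : ℝ, ∀ t : ℝ, 0 ≤ t → t ≤ φδ x → u x ^ (-γ) * t ≤ δ ^ (-γ) * φδ x := by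
    filter_upwards [hG] with x hx
    intro t ht htφ
    rcases eq_or_lt_of_le (hφ_nonneg x) with h0 | h0
    · have ht0 : t = 0 := le_antisymm (htφ.trans h0.symm.le) ht
      rw [ht0, mul_zero, ← h0, mul_zero]
    · have hwx : δ < w x := by
        by_contra hle
        push_neg at hle
        have hz : φδ x = 0 := max_eq_right (by linarith)
        rw [hz] at h0
        exact lt_irrefl _ h0
      have hux : δ < u x := by
        have h2 := hx.2
        simp only [hwdef] at hwx
        linarith
      have h1 : u x ^ (-γ) ≤ δ ^ (-γ) := by
        rw [Real.rpow_neg hδpos.le, Real.rpow_neg (by linarith : (0:ℝ) ≤ u x)]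
        exact inv_anti₀ (Real.rpow_pos_of_pos hδpos γ)
          (Real.rpow_le_rpow hδpos.le hux.le hγ0.le)
      calc u x ^ (-γ) * t ≤ u x ^ (-γ) * φδ x :=
            mul_le_mul_of_nonneg_left htφ (Real.rpow_nonneg (by linarith) _)
        _ ≤ δ ^ (-γ) * φδ x := mul_le_mul_of_nonneg_right h1 (hφ_nonneg x)
  have hψ_nonneg : ∀ᵐ x : ℝ, ∀ n : ℕ, 0 ≤ ψ n x :=
    hG.mono fun x hx n => le_min (hφ_nonneg x) (mul_nonneg (by positivity) hx.2.le)
  -- integrability of the u-potential terms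
  have hIu_gen : ∀ g : ℝ → ℝ, AEMeasurable g (volume : Measure ℝ) →
      (∀ᵐ x : ℝ, 0 ≤ g x ∧ g x ≤ φδ x) → Integrable (fun x => u x ^ (-γ) * g x) := by
    intro g hg hgb
    refine Integrable.mono' (hφδ_int.const_mul (δ ^ (-γ)))
      (huγm.mul hg).aestronglyMeasurable ?_
    filter_upwards [hu_bound, hgb, hG] with x hx hgx hGx
    rw [Real.norm_eq_abs, abs_of_nonneg (mul_nonneg (Real.rpow_nonneg hGx.1.le _) hgx.1)]
    exact hx _ hgx.1 hgx.2
  have hIu_φδ : Integrable (fun x => u x ^ (-γ) * φδ x) :=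
    hIu_gen φδ hφm (Filter.Eventually.of_forall fun x => ⟨hφ_nonneg x, le_refl _⟩)
  have hIu_ψ : ∀ n : ℕ, Integrable (fun x => u x ^ (-γ) * ψ n x) := fun n =>
    hIu_gen (ψ n) (hψm n) (hψ_nonneg.mono fun x hx => ⟨hx n, hψ_le n x⟩)
  have hIu_r : ∀ n : ℕ, Integrable (fun x => u x ^ (-γ) * r n x) := fun n =>
    hIu_gen (r n) (hrm n) (hψ_nonneg.mono fun x hx =>
      ⟨hr_nonneg n x, by simp only [hrdef]; linarith [hx n]⟩)
  -- integrability of the v-potential terms for ψ n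
  have hIv_ψ : ∀ n : ℕ, Integrable (fun x => v x ^ (-γ) * ψ n x) := by
    intro n
    refine Integrable.mono'
      (hφδ_int.add ((hw2.div_const (δ ^ 2)).const_mul ((n : ℝ) + 1)))
      (hvγm.mul (hψm n)).aestronglyMeasurable ?_
    filter_upwards [hG, hψ_nonneg] with x hx hψx
    have hvγ_nonneg : 0 ≤ v x ^ (-γ) := Real.rpow_nonneg hx.2.le _
    rw [Real.norm_eq_abs, abs_of_nonneg (mul_nonneg hvγ_nonneg (hψx n))]
    have hRHS2 : 0 ≤ ((n : ℝ) + 1) * ((w x) ^ 2 / δ ^ 2) := by positivity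
    rcases le_or_gt 1 (v x) with hv1 | hv1
    · have h1 : v x ^ (-γ) ≤ 1 := by
        rw [Real.rpow_neg hx.2.le]
        exact inv_le_one_of_one_le₀ (Real.one_le_rpow hv1 hγ0.le)
      calc v x ^ (-γ) * ψ n x ≤ 1 * ψ n x := mul_le_mul_of_nonneg_right h1 (hψx n)
        _ = ψ n x := one_mul _
        _ ≤ φδ x := hψ_le n x
        _ ≤ φδ x + ((n : ℝ) + 1) * ((w x) ^ 2 / δ ^ 2) := le_add_of_nonneg_right hRHS2
    · rcases eq_or_lt_of_le (hφ_nonneg x) with h0 | h0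
      · have hψ0 : ψ n x = 0 := le_antisymm ((hψ_le n x).trans h0.symm.le) (hψx n)
        rw [hψ0, mul_zero]
        exact add_nonneg (hφ_nonneg x) hRHS2
      · have hwx : δ < w x := by
          by_contra hle
          push_neg at hle
          have hz : φδ x = 0 := max_eq_right (by linarith)
          rw [hz] at h0
          exact lt_irrefl _ h0
        have h2 : 1 ≤ (w x) ^ 2 / δ ^ 2 := by
          rw [le_div_iff₀ (by positivity)]
          nlinarith
        have hpow : v x ^ (-γ) * v x = v x ^ (1 - γ) := by
          rw [show (1:ℝ) - γ = -γ + 1 by ring, Real.rpow_add hx.2, Real.rpow_one]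
        have h3 : v x ^ (-γ) * ψ n x ≤ (n : ℝ) + 1 := by
          calc v x ^ (-γ) * ψ n x ≤ v x ^ (-γ) * (((n : ℝ) + 1) * v x) :=
                mul_le_mul_of_nonneg_left (min_le_right _ _) hvγ_nonneg
            _ = ((n : ℝ) + 1) * (v x ^ (-γ) * v x) := by ring
            _ = ((n : ℝ) + 1) * v x ^ (1 - γ) := by rw [hpow]
            _ ≤ ((n : ℝ) + 1) * 1 := mul_le_mul_of_nonneg_left
                (Real.rpow_le_one hx.2.le hv1.le (by linarith)) (by positivity)
            _ = (n : ℝ) + 1 := mul_one _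
        calc v x ^ (-γ) * ψ n x ≤ ((n : ℝ) + 1) * 1 := by linarith
          _ ≤ ((n : ℝ) + 1) * ((w x) ^ 2 / δ ^ 2) :=
              mul_le_mul_of_nonneg_left h2 (by positivity)
          _ ≤ φδ x + ((n : ℝ) + 1) * ((w x) ^ 2 / δ ^ 2) := le_add_of_nonneg_left (hφ_nonneg x)
  -- membership in X
  have hmemX : ∀ g : ℝ → ℝ, AEMeasurable g (volume : Measure ℝ) →
      (∀ᵐ x : ℝ, (g x) ^ 2 ≤ (w x) ^ 2) →
      Integrable (fun p : ℝ × ℝ => (g p.1 - g p.2) ^ 2 / |p.1 - p.2| ^ 2) → memX g := by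
    intro g hg hgb hK
    have hL2 : Integrable (fun x => (g x) ^ 2) := by
      refine Integrable.mono' hw2 ((hg.pow_const 2).aestronglyMeasurable) ?_
      filter_upwards [hgb] with x hx
      rw [Real.norm_eq_abs, abs_of_nonneg (sq_nonneg _)]
      exact hx
    refine ⟨⟨hL2, hK⟩, ?_⟩
    have hlm : AEMeasurable (fun x : ℝ => Real.log (1 + |x|)) (volume : Measure ℝ) :=
      (Real.measurable_log.comp ((continuous_const.add continuous_abs).measurable)).aemeasurable
    refine Integrable.mono' ((hu.2.const_mul 2).add (hv.2.const_mul 2))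
      (hlm.mul (hg.pow_const 2)).aestronglyMeasurable ?_
    filter_upwards [hgb] with x hx
    have hlog : 0 ≤ Real.log (1 + |x|) :=
      Real.log_nonneg (le_add_of_nonneg_right (abs_nonneg x))
    rw [Real.norm_eq_abs, abs_of_nonneg (mul_nonneg hlog (sq_nonneg _))]
    calc Real.log (1 + |x|) * (g x) ^ 2
        ≤ Real.log (1 + |x|) * (2 * (u x) ^ 2 + 2 * (v x) ^ 2) :=
          mul_le_mul_of_nonneg_left (hx.trans (hw2b x)) hlog
      _ = 2 * (Real.log (1 + |x|) * (u x) ^ 2) + 2 * (Real.log (1 + |x|) * (v x) ^ 2) := by ring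
  have hsq_le : ∀ᵐ x : ℝ, ∀ n : ℕ, (ψ n x) ^ 2 ≤ (w x) ^ 2 ∧ (r n x) ^ 2 ≤ (w x) ^ 2 := by
    filter_upwards [hψ_nonneg] with x hx
    intro n
    have h1 : ψ n x ≤ |w x| := (hψ_le n x).trans (hφ_le_absw x)
    have h2 : r n x ≤ |w x| := by
      have := hx n
      have h3 : r n x ≤ φδ x := by simp only [hrdef]; linarith
      exact h3.trans (hφ_le_absw x)
    constructor
    · nlinarith [hx n, sq_abs (w x), abs_nonneg (w x)]
    · nlinarith [hr_nonneg n x, sq_abs (w x), abs_nonneg (w x)]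
  have hmemXψ : ∀ n : ℕ, memX (ψ n) := fun n =>
    hmemX (ψ n) (hψm n) (hsq_le.mono fun x hx => (hx n).1) (hKψ n)
  have hmemXr : ∀ n : ℕ, memX (r n) := fun n =>
    hmemX (r n) (hrm n) (hsq_le.mono fun x hx => (hx n).2) (hKr n)
  -- the integrable difference integrand and its monotonicity
  have hfact : ∀ᵐ x : ℝ, ∀ n : ℕ, 0 ≤ (v x ^ (-γ) - u x ^ (-γ)) * ψ n x ∧
      (v x ^ (-γ) - u x ^ (-γ)) * ψ 0 x ≤ (v x ^ (-γ) - u x ^ (-γ)) * ψ n x := by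
    filter_upwards [hG, hψ_nonneg] with x hx hψx
    intro n
    rcases eq_or_lt_of_le (hφ_nonneg x) with h0 | h0
    · have hz : ∀ m : ℕ, ψ m x = 0 := fun m => le_antisymm ((hψ_le m x).trans h0.symm.le) (hψx m)
      rw [hz n, hz 0]
      simp
    · have hwx : δ < w x := by
        by_contra hle
        push_neg at hle
        have hz : φδ x = 0 := max_eq_right (by linarith)
        rw [hz] at h0
        exact lt_irrefl _ h0
      have huv : v x < u x := by
        simp only [hwdef] at hwx
        linarith
      have hγle : u x ^ (-γ) ≤ v x ^ (-γ) := by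
        rw [Real.rpow_neg hx.1.le, Real.rpow_neg hx.2.le]
        exact inv_anti₀ (Real.rpow_pos_of_pos hx.2 γ)
          (Real.rpow_le_rpow hx.2.le huv.le hγ0.le)
      have hψmono : ψ 0 x ≤ ψ n x := by
        refine min_le_min (le_refl _) ?_
        have h1 : ((0:ℕ) : ℝ) + 1 ≤ (n : ℝ) + 1 := by
          have : ((0:ℕ) : ℝ) ≤ (n : ℝ) := Nat.cast_le.2 (Nat.zero_le n)
          linarith
        exact mul_le_mul_of_nonneg_right h1 hx.2.le
      exact ⟨mul_nonneg (sub_nonneg.2 hγle) (hψx n),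
        mul_le_mul_of_nonneg_left hψmono (sub_nonneg.2 hγle)⟩
  have hdiff_int : ∀ n : ℕ, Integrable (fun x => (v x ^ (-γ) - u x ^ (-γ)) * ψ n x) := fun n =>
    ((hIv_ψ n).sub (hIu_ψ n)).congr (Filter.Eventually.of_forall fun x => (sub_mul _ _ _).symm)
  set c₁ : ℝ := ∫ x : ℝ, (v x ^ (-γ) - u x ^ (-γ)) * ψ 0 x with hc₁def
  have hc₁_nonneg : 0 ≤ c₁ := integral_nonneg_of_ae (hfact.mono fun x hx => (hx 0).1)
  have hc₁_pos : 0 < c₁ := by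
    rcases eq_or_lt_of_le hc₁_nonneg with h0eq | h' 
    · exfalso
      have hzero : (fun x => (v x ^ (-γ) - u x ^ (-γ)) * ψ 0 x) =ᵐ[volume] 0 :=
        (integral_eq_zero_iff_of_nonneg_ae (hfact.mono fun x hx => (hx 0).1)
          (hdiff_int 0)).1 h0eq.symm
      have hzero' : ∀ᵐ x : ℝ, (v x ^ (-γ) - u x ^ (-γ)) * ψ 0 x = 0 :=
        hzero.mono fun x hx => by simpa using hx
      have hbad : {x : ℝ | v x + δ < u x} ⊆
          {x : ℝ | ¬ ((0 < u x ∧ 0 < v x) ∧ (v x ^ (-γ) - u x ^ (-γ)) * ψ 0 x = 0)} := by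
        intro x hxS
        simp only [Set.mem_setOf_eq] at hxS ⊢
        rintro ⟨hGx, heq⟩
        have hφpos : 0 < φδ x := by
          have h1 : 0 < w x - δ := by simp only [hwdef]; linarith
          exact lt_of_lt_of_le h1 (le_max_left _ _)
        have hψpos : 0 < ψ 0 x := by
          refine lt_min hφpos ?_
          have : (0:ℝ) < v x := hGx.2
          push_cast
          linarith
        have hstrict : u x ^ (-γ) < v x ^ (-γ) := by
          rw [Real.rpow_neg hGx.1.le, Real.rpow_neg hGx.2.le]
          exact inv_strictAnti₀ (Real.rpow_pos_of_pos hGx.2 γ)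
            (Real.rpow_lt_rpow hGx.2.le (by linarith) hγ0)
        nlinarith
      exact hS (measure_mono_null hbad (ae_iff.1 (hG.and hzero')))
    · exact h'
  -- the main chain of inequalities, for each n
  have hkey : ∀ n : ℕ, μ * c₁ ≤ μ * ∫ x : ℝ, u x ^ (-γ) * r n x := by
    intro n
    have hcψ := hcomp (ψ n) (hmemXψ n) (hψ_nonneg.mono fun x hx => hx n)
    have hcr := hcomp (r n) (hmemXr n) (Filter.Eventually.of_forall (hr_nonneg n))
    simp only [bilinGagliardo] at hcψ hcr
    -- step A : the ψ-part
    have hmono : c₁ ≤ ∫ x : ℝ, (v x ^ (-γ) - u x ^ (-γ)) * ψ n x :=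
      integral_mono_ae (hdiff_int 0) (hdiff_int n) (hfact.mono fun x hx => (hx n).2)
    have hsplit : ∫ x : ℝ, (v x ^ (-γ) - u x ^ (-γ)) * ψ n x
        = (∫ x : ℝ, v x ^ (-γ) * ψ n x) - ∫ x : ℝ, u x ^ (-γ) * ψ n x := by
      rw [← integral_sub (hIv_ψ n) (hIu_ψ n)]
      exact integral_congr_ae (Filter.Eventually.of_forall fun x => sub_mul _ _ _)
    -- step B : the r-part
    have hIvr_nonneg : 0 ≤ ∫ x : ℝ, v x ^ (-γ) * r n x :=
      integral_nonneg_of_ae (hG.mono fun x hx =>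
        mul_nonneg (Real.rpow_nonneg hx.2.le _) (hr_nonneg n x))
    -- step C : additivity of the bilinear integrals
    have hIntuψ := wc_kerInt_mul hum (hψm n) hKu (hKψ n)
    have hIntur := wc_kerInt_mul hum (hrm n) hKu (hKr n)
    have hIntvψ := wc_kerInt_mul hvm (hψm n) hKv (hKψ n)
    have hIntvr := wc_kerInt_mul hvm (hrm n) hKv (hKr n)
    have hIntuφ := wc_kerInt_mul hum hφm hKu hKφ
    have hIntvφ := wc_kerInt_mul hvm hφm hKv hKφ
    have haddu : (∫ p : ℝ × ℝ, (u p.1 - u p.2) * (φδ p.1 - φδ p.2) / |p.1 - p.2| ^ 2)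
        = (∫ p : ℝ × ℝ, (u p.1 - u p.2) * (ψ n p.1 - ψ n p.2) / |p.1 - p.2| ^ 2)
          + ∫ p : ℝ × ℝ, (u p.1 - u p.2) * (r n p.1 - r n p.2) / |p.1 - p.2| ^ 2 := by
      rw [← integral_add hIntuψ hIntur]
      exact integral_congr_ae (Filter.Eventually.of_forall fun p => by
        simp only [hrdef]; ring)
    have haddv : (∫ p : ℝ × ℝ, (v p.1 - v p.2) * (φδ p.1 - φδ p.2) / |p.1 - p.2| ^ 2)
        = (∫ p : ℝ × ℝ, (v p.1 - v p.2) * (ψ n p.1 - ψ n p.2) / |p.1 - p.2| ^ 2)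
          + ∫ p : ℝ × ℝ, (v p.1 - v p.2) * (r n p.1 - r n p.2) / |p.1 - p.2| ^ 2 := by
      rw [← integral_add hIntvψ hIntvr]
      exact integral_congr_ae (Filter.Eventually.of_forall fun p => by
        simp only [hrdef]; ring)
    -- step D : nonnegativity of the w-φδ bilinear integral
    have hdiffeq : (∫ p : ℝ × ℝ, (u p.1 - u p.2) * (φδ p.1 - φδ p.2) / |p.1 - p.2| ^ 2)
          - (∫ p : ℝ × ℝ, (v p.1 - v p.2) * (φδ p.1 - φδ p.2) / |p.1 - p.2| ^ 2)
        = ∫ p : ℝ × ℝ, (w p.1 - w p.2) * (φδ p.1 - φδ p.2) / |p.1 - p.2| ^ 2 := by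
      rw [← integral_sub hIntuφ hIntvφ]
      exact (integral_congr_ae (Filter.Eventually.of_forall fun p => by
        simp only [hwdef]; ring)).symm
    have hpos : 0 ≤ ∫ p : ℝ × ℝ, (w p.1 - w p.2) * (φδ p.1 - φδ p.2) / |p.1 - p.2| ^ 2 := by
      refine integral_nonneg fun p => div_nonneg ?_ (sq_nonneg _)
      rcases le_total (w p.1) (w p.2) with h | h
      · have h1 : φδ p.1 ≤ φδ p.2 := max_le_max (by linarith) (le_refl 0)
        have h2 : w p.1 - w p.2 ≤ 0 := by linarith
        have h3 : φδ p.1 - φδ p.2 ≤ 0 := by linarith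
        nlinarith
      · have h1 : φδ p.2 ≤ φδ p.1 := max_le_max (by linarith) (le_refl 0)
        have h2 : 0 ≤ w p.1 - w p.2 := by linarith
        have h3 : 0 ≤ φδ p.1 - φδ p.2 := by linarith
        nlinarith
    -- combine
    have hmul : μ * c₁ ≤ μ * ∫ x : ℝ, (v x ^ (-γ) - u x ^ (-γ)) * ψ n x :=
      mul_le_mul_of_nonneg_left hmono hμ.le
    have hdist : μ * ((∫ x : ℝ, v x ^ (-γ) * ψ n x) - ∫ x : ℝ, u x ^ (-γ) * ψ n x)
        = μ * (∫ x : ℝ, v x ^ (-γ) * ψ n x) - μ * ∫ x : ℝ, u x ^ (-γ) * ψ n x := by ring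
    have hIvr_mul : 0 ≤ μ * ∫ x : ℝ, v x ^ (-γ) * r n x := mul_nonneg hμ.le hIvr_nonneg
    rw [hsplit, hdist] at hmul
    linarith
  have hc₁_le : ∀ n : ℕ, c₁ ≤ ∫ x : ℝ, u x ^ (-γ) * r n x := fun n =>
    le_of_mul_le_mul_left (hkey n) hμ
  -- the limit
  have hlim : Tendsto (fun n : ℕ => ∫ x : ℝ, u x ^ (-γ) * r n x) atTop (nhds 0) := by
    have := tendsto_integral_of_dominated_convergence (F := fun (n : ℕ) x => u x ^ (-γ) * r n x)
      (f := fun _ : ℝ => (0:ℝ)) (bound := fun x => δ ^ (-γ) * φδ x)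
      (fun n => (huγm.mul (hrm n)).aestronglyMeasurable)
      (hφδ_int.const_mul (δ ^ (-γ)))
      (fun n => by
        filter_upwards [hu_bound, hψ_nonneg, hG] with x hx hψx hGx
        rw [Real.norm_eq_abs,
          abs_of_nonneg (mul_nonneg (Real.rpow_nonneg hGx.1.le _) (hr_nonneg n x))]
        refine hx _ (hr_nonneg n x) ?_
        have := hψx n
        simp only [hrdef]
        linarith)
      (by
        filter_upwards [hG] with x hx
        obtain ⟨N, hN⟩ := exists_nat_ge (φδ x / v x)
        have hev : ∀ᶠ n : ℕ in atTop, u x ^ (-γ) * r n x = 0 := by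
          refine eventually_atTop.2 ⟨N, fun n hn => ?_⟩
          have h1 : φδ x ≤ ((n : ℝ) + 1) * v x := by
            have h2 : φδ x / v x ≤ (n : ℝ) + 1 := by
              have : (N : ℝ) ≤ (n : ℝ) := Nat.cast_le.2 hn
              linarith
            calc φδ x = (φδ x / v x) * v x := (div_mul_cancel₀ (φδ x) (ne_of_gt hx.2)).symm
              _ ≤ ((n : ℝ) + 1) * v x := mul_le_mul_of_nonneg_right h2 hx.2.le
          have h3 : ψ n x = φδ x := min_eq_left h1
          have h4 : r n x = 0 := by simp only [hrdef, h3, sub_self]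
          rw [h4, mul_zero]
        exact Tendsto.congr' (hev.mono fun n h => h.symm) tendsto_const_nhds)
    simpa using this
  have hfin : c₁ ≤ 0 := ge_of_tendsto' hlim hc₁_le
  linarith
end
end
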